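/- arXiv:1103.6095 — 5 statements merged into one kernel-verified Lean document; each statement's English description precedes it below -/
import Mathlib

section
/- For any two connected graphs G and H, the vertex connectivity of the Cartesian product satisfies κ(G □ H) ≥ κ(G) + κ(H). -/
open SimpleGraph

variable {V : Type*}

/-- `T` is an `S`-tree in `G`: a subgraph containing `S` that is a tree. -/
def IsSTree (G : SimpleGraph V) (S : Set V) (T : G.Subgraph) : Prop :=
  S ⊆ T.verts ∧ T.coe.IsTree

/-- A family of `S`-trees is pairwise internally disjoint. -/
def PairwiseInternallyDisjoint (G : SimpleGraph V) (S : Set V) {r : ℕ}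
    (T : Fin r → G.Subgraph) : Prop :=
  ∀ i j, i ≠ j → (T i).verts ∩ (T j).verts = S ∧ Disjoint (T i).edgeSet (T j).edgeSet

/-- `κ(S)`: the greatest number of pairwise internally disjoint `S`-trees. -/
noncomputable def treeConn (G : SimpleGraph V) (S : Set V) : ℕ :=
  sSup {r | ∃ T : Fin r → G.Subgraph,
    (∀ i, IsSTree G S (T i)) ∧ PairwiseInternallyDisjoint G S T}

/-- The generalized `k`-connectivity `κ_k(G)`. -/
noncomputable def gkConn (G : SimpleGraph V) (k : ℕ) : ℕ :=
  sInf {r | ∃ S : Finset V, S.card = k ∧ treeConn G ↑S = r}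

/-- The vertex connectivity `κ(G)`: minimum size of a set of vertices whose
removal leaves a disconnected or trivial graph. -/
noncomputable def vertConn [Fintype V] (G : SimpleGraph V) : ℕ :=
  sInf {n | ∃ S : Finset V, S.card = n ∧
    (¬ ((⊤ : G.Subgraph).deleteVerts ↑S).coe.Connected ∨ Fintype.card V - S.card ≤ 1)}

/-! ### Auxiliary lemmas -/

section Aux

open Finset
open scoped Classical

set_option linter.unusedSectionVars false

section OneGraph

variable {α : Type*} [Fintype α] {G : SimpleGraph α}

lemma vertConn_le (S : Finset α)
    (h : ¬ ((⊤ : G.Subgraph).deleteVerts ↑S).coe.Connected ∨ Fintype.card α - S.card ≤ 1) :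
    vertConn G ≤ S.card := Nat.sInf_le ⟨S, rfl, h⟩

lemma conn_of_card_lt {S : Finset α} (h : S.card < vertConn G) :
    ((⊤ : G.Subgraph).deleteVerts ↑S).coe.Connected ∧ 2 ≤ Fintype.card α - S.card := by
  by_contra hc
  have : vertConn G ≤ S.card := by
    refine vertConn_le S ?_
    rcases not_and_or.mp hc with h1 | h2
    · exact Or.inl h1
    · exact Or.inr (by omega)
  omega

lemma vertConn_le_card_sub_one [Nonempty α] : vertConn G ≤ Fintype.card α - 1 := by
  obtain ⟨S, -, hS⟩ := Finset.exists_subset_card_eq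
    (show Fintype.card α - 1 ≤ (univ : Finset α).card by simp)
  exact hS ▸ vertConn_le S (Or.inr (by omega))

lemma mem_del {S : Finset α} {z : α} (hz : z ∉ S) :
    z ∈ ((⊤ : G.Subgraph).deleteVerts ↑S).verts := by simp [hz]

/-- helper: `x + y ≤ x*y + 1` for positive naturals. -/
lemma mul_aux {x y : ℕ} (hx : 1 ≤ x) (hy : 1 ≤ y) : x + y ≤ x * y + 1 := by
  obtain ⟨x', rfl⟩ := Nat.exists_eq_add_of_le hx
  obtain ⟨y', rfl⟩ := Nat.exists_eq_add_of_le hy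
  ring_nf
  nlinarith [Nat.zero_le (x' * y')]

lemma card_eq_sum_fibers (S : Finset (α × β)) [Fintype β] :
    S.card = ∑ u : α, (univ.filter fun w => (u, w) ∈ S).card := by
  rw [Finset.card_eq_sum_card_fiberwise (f := Prod.fst) (t := univ) (fun z _ => mem_univ _)]
  refine Finset.sum_congr rfl fun u _ => ?_
  refine Finset.card_bij' (fun z _ => z.2) (fun w _ => (u, w)) ?_ ?_ ?_ ?_
  · rintro ⟨z1, z2⟩ hz
    rw [Finset.mem_filter] at hz
    obtain ⟨h1, h2⟩ := hz
    simp only at h2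
    subst h2
    simp only [Finset.mem_filter, Finset.mem_univ, true_and]
    exact h1
  · intro w hw
    rw [Finset.mem_filter] at hw
    rw [Finset.mem_filter]
    exact ⟨hw.2, rfl⟩
  · rintro ⟨z1, z2⟩ hz
    rw [Finset.mem_filter] at hz
    obtain ⟨h1, h2⟩ := hz
    simp only at h2
    subst h2
    rfl
  · intro w hw
    rfl

end OneGraph

section TwoGraphs

variable {α β : Type*} [Fintype α] [Fintype β] {G : SimpleGraph α} {H : SimpleGraph β}

lemma col_reach (S : Finset (α × β)) (u : α) (p q : β)
    (hp : (u, p) ∉ S) (hq : (u, q) ∉ S)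
    (hcard : (univ.filter fun w => (u, w) ∈ S).card < vertConn H) :
    ((⊤ : (G □ H).Subgraph).deleteVerts ↑S).coe.Reachable
      ⟨(u, p), mem_del hp⟩ ⟨(u, q), mem_del hq⟩ := by
  set T : Finset β := univ.filter (fun w => (u, w) ∈ S) with hT
  have hconn : ((⊤ : H.Subgraph).deleteVerts ↑T).coe.Connected := (conn_of_card_lt hcard).1
  have hmem : ∀ w : β, w ∉ T → (u, w) ∉ S := by
    intro w hw hws
    exact hw (by simp [hT, hws])
  let F : ((⊤ : H.Subgraph).deleteVerts ↑T).coe →g ((⊤ : (G □ H).Subgraph).deleteVerts ↑S).coe :=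
    { toFun := fun w => ⟨(u, w.val), by
        have hw : w.val ∉ T := by
          have h2 := w.prop.2
          simpa using h2
        simp [hmem _ hw]⟩
      map_rel' := by
        intro a b hab
        rw [Subgraph.coe_adj, Subgraph.deleteVerts_adj] at hab ⊢
        refine ⟨by simp, ?_, by simp, ?_, ?_⟩
        · simpa using hmem _ (by simpa using hab.2.1)
        · simpa using hmem _ (by simpa using hab.2.2.2.1)
        · rw [Subgraph.top_adj] at hab ⊢
          exact boxProd_adj.mpr (Or.inr ⟨hab.2.2.2.2, rfl⟩) }
  have hr := hconn.preconnected
    ⟨p, by simp [show p ∉ T from fun h => hp (by simpa [hT] using h)]⟩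
    ⟨q, by simp [show q ∉ T from fun h => hq (by simpa [hT] using h)]⟩
  exact hr.map F

lemma row_reach (S : Finset (α × β)) (v : β) (p q : α)
    (hp : (p, v) ∉ S) (hq : (q, v) ∉ S)
    (hcard : (univ.filter fun w => (w, v) ∈ S).card < vertConn G) :
    ((⊤ : (G □ H).Subgraph).deleteVerts ↑S).coe.Reachable
      ⟨(p, v), mem_del hp⟩ ⟨(q, v), mem_del hq⟩ := by
  set T : Finset α := univ.filter (fun w => (w, v) ∈ S) with hT
  have hconn : ((⊤ : G.Subgraph).deleteVerts ↑T).coe.Connected := (conn_of_card_lt hcard).1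
  have hmem : ∀ w : α, w ∉ T → (w, v) ∉ S := by
    intro w hw hws
    exact hw (by simp [hT, hws])
  let F : ((⊤ : G.Subgraph).deleteVerts ↑T).coe →g ((⊤ : (G □ H).Subgraph).deleteVerts ↑S).coe :=
    { toFun := fun w => ⟨(w.val, v), by
        have hw : w.val ∉ T := by
          have h2 := w.prop.2
          simpa using h2
        simp [hmem _ hw]⟩
      map_rel' := by
        intro a b hab
        rw [Subgraph.coe_adj, Subgraph.deleteVerts_adj] at hab ⊢
        refine ⟨by simp, ?_, by simp, ?_, ?_⟩
        · simpa using hmem _ (by simpa using hab.2.1)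
        · simpa using hmem _ (by simpa using hab.2.2.2.1)
        · rw [Subgraph.top_adj] at hab ⊢
          exact boxProd_adj.mpr (Or.inl ⟨hab.2.2.2.2, rfl⟩) }
  have hr := hconn.preconnected
    ⟨p, by simp [show p ∉ T from fun h => hp (by simpa [hT] using h)]⟩
    ⟨q, by simp [show q ∉ T from fun h => hq (by simpa [hT] using h)]⟩
  exact hr.map F

lemma col_card_of_sep (S : Finset (α × β)) (u : α) (p q : β)
    (hp : (u, p) ∉ S) (hq : (u, q) ∉ S)
    (hnr : ¬ ((⊤ : (G □ H).Subgraph).deleteVerts ↑S).coe.Reachable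
      ⟨(u, p), mem_del hp⟩ ⟨(u, q), mem_del hq⟩) :
    vertConn H ≤ (univ.filter fun w => (u, w) ∈ S).card := by
  by_contra h
  push_neg at h
  exact hnr (col_reach S u p q hp hq h)

lemma row_card_of_sep (S : Finset (α × β)) (v : β) (p q : α)
    (hp : (p, v) ∉ S) (hq : (q, v) ∉ S)
    (hnr : ¬ ((⊤ : (G □ H).Subgraph).deleteVerts ↑S).coe.Reachable
      ⟨(p, v), mem_del hp⟩ ⟨(q, v), mem_del hq⟩) :
    vertConn G ≤ (univ.filter fun w => (w, v) ∈ S).card := by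
  by_contra h
  push_neg at h
  exact hnr (row_reach S v p q hp hq h)

lemma one_le_vertConn (hG : G.Connected) (h2 : 2 ≤ Fintype.card α) : 1 ≤ vertConn G := by
  by_contra h
  have h0 : vertConn G = 0 := by omega
  have hmem : 0 ∈ {n | ∃ S : Finset α, S.card = n ∧
      (¬ ((⊤ : G.Subgraph).deleteVerts ↑S).coe.Connected ∨ Fintype.card α - S.card ≤ 1)} := by
    rw [← h0]
    apply Nat.sInf_mem
    exact ⟨(univ : Finset α).card, univ, rfl, Or.inr (by simp)⟩
  obtain ⟨S, hS0, hpr⟩ := hmem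
  rw [Finset.card_eq_zero] at hS0
  subst hS0
  rcases hpr with h1 | h2'
  · refine h1 ?_
    rw [Finset.coe_empty, SimpleGraph.Subgraph.deleteVerts_empty]
    exact (Subgraph.topIso.connected_iff).mpr hG
  · simp at h2'
    omega

lemma card_eq_sum_fibers_row (S : Finset (α × β)) :
    S.card = ∑ v : β, (univ.filter fun w => (w, v) ∈ S).card := by
  rw [Finset.card_eq_sum_card_fiberwise (f := Prod.snd) (t := univ) (fun z _ => mem_univ _)]
  refine Finset.sum_congr rfl fun v _ => ?_
  refine Finset.card_bij' (fun z _ => z.1) (fun w _ => (w, v)) ?_ ?_ ?_ ?_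
  · rintro ⟨z1, z2⟩ hz
    rw [Finset.mem_filter] at hz
    obtain ⟨h1, h2⟩ := hz
    simp only at h2
    subst h2
    simp only [Finset.mem_filter, Finset.mem_univ, true_and]
    exact h1
  · intro w hw
    rw [Finset.mem_filter] at hw
    rw [Finset.mem_filter]
    exact ⟨hw.2, rfl⟩
  · rintro ⟨z1, z2⟩ hz
    rw [Finset.mem_filter] at hz
    obtain ⟨h1, h2⟩ := hz
    simp only at h2
    subst h2
    rfl
  · intro w hw
    rfl

lemma fiber_card_col (S : Finset (α × β)) (u : α) :
    (S.filter fun z => z.1 = u).card = (univ.filter fun w => (u, w) ∈ S).card := by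
  refine Finset.card_bij' (fun z _ => z.2) (fun w _ => (u, w)) ?_ ?_ ?_ ?_
  · rintro ⟨z1, z2⟩ hz
    rw [Finset.mem_filter] at hz
    obtain ⟨h1, h2⟩ := hz
    simp only at h2
    subst h2
    simp only [Finset.mem_filter, Finset.mem_univ, true_and]
    exact h1
  · intro w hw
    rw [Finset.mem_filter] at hw
    rw [Finset.mem_filter]
    exact ⟨hw.2, rfl⟩
  · rintro ⟨z1, z2⟩ hz
    rw [Finset.mem_filter] at hz
    obtain ⟨h1, h2⟩ := hz
    simp only at h2
    subst h2
    rfl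
  · intro w hw
    rfl

lemma fiber_card_row (S : Finset (α × β)) (v : β) :
    (S.filter fun z => z.2 = v).card = (univ.filter fun w => (w, v) ∈ S).card := by
  refine Finset.card_bij' (fun z _ => z.1) (fun w _ => (w, v)) ?_ ?_ ?_ ?_
  · rintro ⟨z1, z2⟩ hz
    rw [Finset.mem_filter] at hz
    obtain ⟨h1, h2⟩ := hz
    simp only at h2
    subst h2
    simp only [Finset.mem_filter, Finset.mem_univ, true_and]
    exact h1
  · intro w hw
    rw [Finset.mem_filter] at hw
    rw [Finset.mem_filter]
    exact ⟨hw.2, rfl⟩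
  · rintro ⟨z1, z2⟩ hz
    rw [Finset.mem_filter] at hz
    obtain ⟨h1, h2⟩ := hz
    simp only at h2
    subst h2
    rfl
  · intro w hw
    rfl

lemma key (hG : G.Connected) (hH : H.Connected) (S : Finset (α × β))
    (hprop : ¬ ((⊤ : (G □ H).Subgraph).deleteVerts ↑S).coe.Connected ∨
      Fintype.card (α × β) - S.card ≤ 1) :
    vertConn G + vertConn H ≤ S.card := by
  by_contra hcon
  push_neg at hcon
  have hαne : Nonempty α := hG.nonempty
  have hβne : Nonempty β := hH.nonempty
  have hα1 : 1 ≤ Fintype.card α := Fintype.card_pos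
  have hβ1 : 1 ≤ Fintype.card β := Fintype.card_pos
  have hkle : vertConn G ≤ Fintype.card α - 1 := vertConn_le_card_sub_one
  have hlle : vertConn H ≤ Fintype.card β - 1 := vertConn_le_card_sub_one
  have hprodcard : Fintype.card (α × β) = Fintype.card α * Fintype.card β := Fintype.card_prod α β
  have hmul : Fintype.card α + Fintype.card β ≤ Fintype.card α * Fintype.card β + 1 :=
    mul_aux hα1 hβ1
  have hcard2 : 2 ≤ Fintype.card (α × β) - S.card := by omega
  have hnc : ¬ ((⊤ : (G □ H).Subgraph).deleteVerts ↑S).coe.Connected := by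
    rcases hprop with h | h
    · exact h
    · omega
  have hScard : S.card < Fintype.card (α × β) := by omega
  have hvne : Nonempty ↑(((⊤ : (G □ H).Subgraph).deleteVerts (↑S : Set (α × β))).verts) := by
    obtain ⟨z, hz⟩ : ∃ z, z ∉ S := by
      by_contra h
      push_neg at h
      have hsub : (univ : Finset (α × β)) ⊆ S := fun z _ => h z
      have := Finset.card_le_card hsub
      rw [Finset.card_univ] at this
      omega
    exact ⟨⟨z, mem_del hz⟩⟩
  obtain ⟨x, y, hxy⟩ : ∃ x y, ¬ ((⊤ : (G □ H).Subgraph).deleteVerts ↑S).coe.Reachable x y := by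
    by_contra h
    push_neg at h
    haveI := hvne
    exact hnc ⟨h⟩
  have hxS : (x.val.1, x.val.2) ∉ S := by
    have := x.prop.2
    simpa using this
  have hyS : (y.val.1, y.val.2) ∉ S := by
    have := y.prop.2
    simpa using this
  have hRx : ((⊤ : (G □ H).Subgraph).deleteVerts ↑S).coe.Reachable
      ⟨(x.val.1, x.val.2), mem_del hxS⟩ x := Reachable.refl x
  have hRy : ¬ ((⊤ : (G □ H).Subgraph).deleteVerts ↑S).coe.Reachable
      ⟨(y.val.1, y.val.2), mem_del hyS⟩ x := fun h => hxy h.symm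
  by_cases hmc : ∃ (u : α) (p q : β) (hp : (u, p) ∉ S) (hq : (u, q) ∉ S),
      ((⊤ : (G □ H).Subgraph).deleteVerts ↑S).coe.Reachable ⟨(u, p), mem_del hp⟩ x ∧
      ¬ ((⊤ : (G □ H).Subgraph).deleteVerts ↑S).coe.Reachable ⟨(u, q), mem_del hq⟩ x
  · by_cases hmr : ∃ (v : β) (p q : α) (hp : (p, v) ∉ S) (hq : (q, v) ∉ S),
        ((⊤ : (G □ H).Subgraph).deleteVerts ↑S).coe.Reachable ⟨(p, v), mem_del hp⟩ x ∧
        ¬ ((⊤ : (G □ H).Subgraph).deleteVerts ↑S).coe.Reachable ⟨(q, v), mem_del hq⟩ x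
    · -- Case A : a mixed column u₀ and a mixed row v₀
      obtain ⟨u₀, p₀, q₀, hp₀, hq₀, hrp, hrq⟩ := hmc
      obtain ⟨v₀, a₀, c₀, ha₀, hc₀, hra, hrc⟩ := hmr
      have hWcard : vertConn H ≤ (univ.filter fun w => (u₀, w) ∈ S).card :=
        col_card_of_sep S u₀ p₀ q₀ hp₀ hq₀ (fun hr => hrq (hr.symm.trans hrp))
      have hTcard : vertConn G ≤ (univ.filter fun w => (w, v₀) ∈ S).card :=
        row_card_of_sep S v₀ a₀ c₀ ha₀ hc₀ (fun hr => hrc (hr.symm.trans hra))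
      have hScolcard : (S.filter fun z => z.1 = u₀).card =
          (univ.filter fun w => (u₀, w) ∈ S).card := fiber_card_col S u₀
      have hSrowcard : (S.filter fun z => z.2 = v₀).card =
          (univ.filter fun w => (w, v₀) ∈ S).card := fiber_card_row S v₀
      have hui : ((S.filter fun z => z.1 = u₀) ∪ (S.filter fun z => z.2 = v₀)).card +
          ((S.filter fun z => z.1 = u₀) ∩ (S.filter fun z => z.2 = v₀)).card =
          (S.filter fun z => z.1 = u₀).card + (S.filter fun z => z.2 = v₀).card :=
        Finset.card_union_add_card_inter _ _
      have hsub : (S.filter fun z => z.1 = u₀) ∪ (S.filter fun z => z.2 = v₀) ⊆ S :=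
        Finset.union_subset (Finset.filter_subset _ _) (Finset.filter_subset _ _)
      have hUle := Finset.card_le_card hsub
      have hIle : ((S.filter fun z => z.1 = u₀) ∩ (S.filter fun z => z.2 = v₀)).card ≤ 1 := by
        refine Finset.card_le_one.mpr ?_
        intro w hw w' hw'
        rw [Finset.mem_inter, Finset.mem_filter, Finset.mem_filter] at hw hw'
        have hw1 : w = (u₀, v₀) := Prod.ext hw.1.2 hw.2.2
        have hw2 : w' = (u₀, v₀) := Prod.ext hw'.1.2 hw'.2.2
        rw [hw1, hw2]
      have hSeq : (S.filter fun z => z.1 = u₀) ∪ (S.filter fun z => z.2 = v₀) = S :=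
        Finset.eq_of_subset_of_card_le hsub (by omega)
      have huv : (u₀, v₀) ∈ S := by
        have hIpos : 0 < ((S.filter fun z => z.1 = u₀) ∩ (S.filter fun z => z.2 = v₀)).card := by
          omega
        obtain ⟨z, hz⟩ := Finset.card_pos.mp hIpos
        rw [Finset.mem_inter, Finset.mem_filter, Finset.mem_filter] at hz
        have : z = (u₀, v₀) := Prod.ext hz.1.2 hz.2.2
        rw [← this]
        exact hz.1.1
      have hstruct : ∀ z ∈ S, z.1 = u₀ ∨ z.2 = v₀ := by
        intro z hz
        rw [← hSeq, Finset.mem_union, Finset.mem_filter, Finset.mem_filter] at hz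
        tauto
      have hu₀T : u₀ ∈ univ.filter fun w => (w, v₀) ∈ S :=
        Finset.mem_filter.mpr ⟨mem_univ _, huv⟩
      have hv₀W : v₀ ∈ univ.filter fun w => (u₀, w) ∈ S :=
        Finset.mem_filter.mpr ⟨mem_univ _, huv⟩
      have hk1 : 1 ≤ vertConn G := by
        have h2 := Finset.card_pos.mpr ⟨u₀, hu₀T⟩
        omega
      have hl1 : 1 ≤ vertConn H := by
        have h2 := Finset.card_pos.mpr ⟨v₀, hv₀W⟩
        omega
      have hTk : (univ.filter fun w => (w, v₀) ∈ S).card = vertConn G := by omega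
      have hWl : (univ.filter fun w => (u₀, w) ∈ S).card = vertConn H := by omega
      obtain ⟨x0, hx0⟩ : ∃ w, w ∉ univ.filter fun w => (w, v₀) ∈ S := by
        by_contra h
        push_neg at h
        have hsub2 : (univ : Finset α) ⊆ univ.filter fun w => (w, v₀) ∈ S := fun w _ => h w
        have := Finset.card_le_card hsub2
        rw [Finset.card_univ] at this
        omega
      obtain ⟨y0, hy0⟩ : ∃ w, w ∉ univ.filter fun w => (u₀, w) ∈ S := by
        by_contra h
        push_neg at h
        have hsub2 : (univ : Finset β) ⊆ univ.filter fun w => (u₀, w) ∈ S := fun w _ => h w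
        have := Finset.card_le_card hsub2
        rw [Finset.card_univ] at this
        omega
      have hx0u : x0 ≠ u₀ := fun h => hx0 (h ▸ hu₀T)
      have hy0v : y0 ≠ v₀ := fun h => hy0 (h ▸ hv₀W)
      have hcol_empty : ∀ a, (a ∉ univ.filter fun w => (w, v₀) ∈ S) → ∀ w, (a, w) ∉ S := by
        intro a haT w hws
        rcases hstruct _ hws with h1 | h2
        · simp only at h1
          rw [h1] at haT
          exact haT hu₀T
        · simp only at h2
          rw [h2] at hws
          exact haT (Finset.mem_filter.mpr ⟨mem_univ _, hws⟩)
      have hrow_y0 : ∀ w, (w, y0) ∉ S := by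
        intro w hws
        rcases hstruct _ hws with h1 | h2
        · simp only at h1
          rw [h1] at hws
          exact hy0 (Finset.mem_filter.mpr ⟨mem_univ _, hws⟩)
        · simp only at h2
          exact hy0v h2
      have hcol_card : ∀ a, (a ∉ univ.filter fun w => (w, v₀) ∈ S) →
          (univ.filter fun w => (a, w) ∈ S).card = 0 := by
        intro a ha
        rw [Finset.card_eq_zero, Finset.filter_eq_empty_iff]
        intro w _
        exact hcol_empty a ha w
      have hrow_y0_card : (univ.filter fun w => (w, y0) ∈ S).card = 0 := by
        rw [Finset.card_eq_zero, Finset.filter_eq_empty_iff]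
        intro w _
        exact hrow_y0 w
      have h0 : (x0, y0) ∉ S := hcol_empty x0 hx0 y0
      have hub : ∀ a b (hz : (a, b) ∉ S),
          ((⊤ : (G □ H).Subgraph).deleteVerts ↑S).coe.Reachable
            ⟨(a, b), mem_del hz⟩ ⟨(x0, y0), mem_del h0⟩ := by
        intro a b hz
        by_cases haT : a ∈ univ.filter fun w => (w, v₀) ∈ S
        · by_cases hau : a = u₀
          · subst hau
            have hbW : b ∉ univ.filter fun w => (a, w) ∈ S :=
              fun hb => hz (Finset.mem_filter.mp hb).2
            have hbv : b ≠ v₀ := fun h => hz (h ▸ huv)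
            have hrowb : ∀ w, (w, b) ∉ S := by
              intro w hws
              rcases hstruct _ hws with h1 | h2
              · simp only at h1
                rw [h1] at hws
                exact hbW (Finset.mem_filter.mpr ⟨mem_univ _, hws⟩)
              · exact hbv h2
            have hrowb_card : (univ.filter fun w => (w, b) ∈ S).card = 0 := by
              rw [Finset.card_eq_zero, Finset.filter_eq_empty_iff]
              intro w _
              exact hrowb w
            have hx0b : (x0, b) ∉ S := hrowb x0
            refine (row_reach S b a x0 hz hx0b ?_).trans
              (col_reach S x0 b y0 hx0b h0 ?_)
            · rw [hrowb_card]
              omega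
            · rw [hcol_card x0 hx0]
              omega
          · have hk2 : 2 ≤ (univ.filter fun w => (w, v₀) ∈ S).card :=
              Finset.one_lt_card.mpr ⟨u₀, hu₀T, a, haT, fun h => hau h.symm⟩
            have haS : (a, v₀) ∈ S := (Finset.mem_filter.mp haT).2
            have hbv : b ≠ v₀ := fun h => hz (h ▸ haS)
            have hrowb_sub : (univ.filter fun w => (w, b) ∈ S) ⊆ {u₀} := by
              intro w hw
              rw [Finset.mem_filter] at hw
              rcases hstruct _ hw.2 with h1 | h2
              · exact Finset.mem_singleton.mpr h1
              · exact absurd h2 hbv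
            have hrowb_card : (univ.filter fun w => (w, b) ∈ S).card ≤ 1 :=
              le_trans (Finset.card_le_card hrowb_sub) (by simp)
            have hx0b : (x0, b) ∉ S := by
              intro hws
              rcases hstruct _ hws with h1 | h2
              · exact hx0u h1
              · exact hbv h2
            refine (row_reach S b a x0 hz hx0b ?_).trans
              (col_reach S x0 b y0 hx0b h0 ?_)
            · omega
            · rw [hcol_card x0 hx0]
              omega
        · have hay0 : (a, y0) ∉ S := hcol_empty a haT y0
          refine (col_reach S a b y0 hz hay0 ?_).trans
            (row_reach S y0 a x0 hay0 h0 ?_)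
          · rw [hcol_card a haT]
            omega
          · rw [hrow_y0_card]
            omega
      exact hxy ((hub x.val.1 x.val.2 hxS).trans (hub y.val.1 y.val.2 hyS).symm)
    · -- Case C : a mixed column, but no mixed row
      push_neg at hmr
      obtain ⟨u₀, p₀, q₀, hp₀, hq₀, hrp, hrq⟩ := hmc
      have hpq : p₀ ≠ q₀ := by
        rintro rfl
        exact hrq hrp
      have hβ2 : 2 ≤ Fintype.card β :=
        Fintype.one_lt_card_iff_nontrivial.mpr ⟨⟨p₀, q₀, hpq⟩⟩
      have hl1 : 1 ≤ vertConn H := one_le_vertConn hH hβ2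
      have hu₀l : vertConn H ≤ (univ.filter fun w => (u₀, w) ∈ S).card :=
        col_card_of_sep S u₀ p₀ q₀ hp₀ hq₀ (fun hr => hrq (hr.symm.trans hrp))
      have hcol1 : ∀ u, u ≠ u₀ → 1 ≤ (univ.filter fun w => (u, w) ∈ S).card := by
        intro u hu
        rcases Classical.em ((u, p₀) ∈ S) with h1 | h1
        · exact Finset.card_pos.mpr ⟨p₀, Finset.mem_filter.mpr ⟨mem_univ _, h1⟩⟩
        rcases Classical.em ((u, q₀) ∈ S) with h2 | h2
        · exact Finset.card_pos.mpr ⟨q₀, Finset.mem_filter.mpr ⟨mem_univ _, h2⟩⟩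
        have hRup := hmr p₀ u₀ u hp₀ h1 hrp
        have hnRuq : ¬ ((⊤ : (G □ H).Subgraph).deleteVerts ↑S).coe.Reachable
            ⟨(u, q₀), mem_del h2⟩ x := fun h => hrq (hmr q₀ u u₀ h2 hq₀ h)
        have := col_card_of_sep S u p₀ q₀ h1 h2 (fun hr => hnRuq (hr.symm.trans hRup))
        omega
      have hsum := card_eq_sum_fibers S
      have hsplit : (∑ u ∈ univ \ {u₀}, (univ.filter fun w => (u, w) ∈ S).card) +
          (univ.filter fun w => (u₀, w) ∈ S).card =
          ∑ u : α, (univ.filter fun w => (u, w) ∈ S).card := by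
        have := Finset.sum_sdiff (f := fun u => (univ.filter fun w => (u, w) ∈ S).card)
          (Finset.subset_univ {u₀})
        simpa using this
      have hrest : (univ \ {u₀}).card • 1 ≤
          ∑ u ∈ univ \ {u₀}, (univ.filter fun w => (u, w) ∈ S).card := by
        apply Finset.card_nsmul_le_sum
        intro u hu
        rw [Finset.mem_sdiff, Finset.mem_singleton] at hu
        exact hcol1 u hu.2
      rw [smul_eq_mul, mul_one, Finset.card_sdiff_of_subset (Finset.subset_univ _),
        Finset.card_singleton, Finset.card_univ] at hrest
      omega
  · by_cases hmr : ∃ (v : β) (p q : α) (hp : (p, v) ∉ S) (hq : (q, v) ∉ S),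
        ((⊤ : (G □ H).Subgraph).deleteVerts ↑S).coe.Reachable ⟨(p, v), mem_del hp⟩ x ∧
        ¬ ((⊤ : (G □ H).Subgraph).deleteVerts ↑S).coe.Reachable ⟨(q, v), mem_del hq⟩ x
    · -- Case C' : a mixed row, but no mixed column
      push_neg at hmc
      obtain ⟨v₀, a₀, c₀, ha₀, hc₀, hra, hrc⟩ := hmr
      have hac : a₀ ≠ c₀ := by
        rintro rfl
        exact hrc hra
      have hα2 : 2 ≤ Fintype.card α :=
        Fintype.one_lt_card_iff_nontrivial.mpr ⟨⟨a₀, c₀, hac⟩⟩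
      have hk1 : 1 ≤ vertConn G := one_le_vertConn hG hα2
      have hv₀k : vertConn G ≤ (univ.filter fun w => (w, v₀) ∈ S).card :=
        row_card_of_sep S v₀ a₀ c₀ ha₀ hc₀ (fun hr => hrc (hr.symm.trans hra))
      have hrow1 : ∀ v, v ≠ v₀ → 1 ≤ (univ.filter fun w => (w, v) ∈ S).card := by
        intro v hv
        rcases Classical.em ((a₀, v) ∈ S) with h1 | h1
        · exact Finset.card_pos.mpr ⟨a₀, Finset.mem_filter.mpr ⟨mem_univ _, h1⟩⟩
        rcases Classical.em ((c₀, v) ∈ S) with h2 | h2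
        · exact Finset.card_pos.mpr ⟨c₀, Finset.mem_filter.mpr ⟨mem_univ _, h2⟩⟩
        have hRav := hmc a₀ v₀ v ha₀ h1 hra
        have hnRcv : ¬ ((⊤ : (G □ H).Subgraph).deleteVerts ↑S).coe.Reachable
            ⟨(c₀, v), mem_del h2⟩ x := fun h => hrc (hmc c₀ v v₀ h2 hc₀ h)
        have := row_card_of_sep S v a₀ c₀ h1 h2 (fun hr => hnRcv (hr.symm.trans hRav))
        omega
      have hsum := card_eq_sum_fibers_row S
      have hsplit : (∑ v ∈ univ \ {v₀}, (univ.filter fun w => (w, v) ∈ S).card) +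
          (univ.filter fun w => (w, v₀) ∈ S).card =
          ∑ v : β, (univ.filter fun w => (w, v) ∈ S).card := by
        have := Finset.sum_sdiff (f := fun v => (univ.filter fun w => (w, v) ∈ S).card)
          (Finset.subset_univ {v₀})
        simpa using this
      have hrest : (univ \ {v₀}).card • 1 ≤
          ∑ v ∈ univ \ {v₀}, (univ.filter fun w => (w, v) ∈ S).card := by
        apply Finset.card_nsmul_le_sum
        intro v hv
        rw [Finset.mem_sdiff, Finset.mem_singleton] at hv
        exact hrow1 v hv.2
      rw [smul_eq_mul, mul_one, Finset.card_sdiff_of_subset (Finset.subset_univ _),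
        Finset.card_singleton, Finset.card_univ] at hrest
      omega
    · -- Case B : no mixed column, no mixed row
      push_neg at hmc hmr
      set a := x.val.1 with ha
      set b := x.val.2 with hb
      set c := y.val.1 with hc
      set d := y.val.2 with hd
      have hac : a ≠ c := by
        intro h
        have h2 : (a, d) ∉ S := by rw [h]; exact hyS
        have h3 := hmc a b d hxS h2 hRx
        refine hRy ?_
        have h4 : (⟨(c, d), mem_del hyS⟩ :
            ↑(((⊤ : (G □ H).Subgraph).deleteVerts (↑S : Set (α × β))).verts)) =
            ⟨(a, d), mem_del h2⟩ := Subtype.ext (by show ((c, d) : α × β) = (a, d); rw [h])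
        rw [h4]
        exact h3
      have hcover_col : ∀ u : α, (u, b) ∈ S ∨ (u, d) ∈ S := by
        intro u
        by_contra h
        push_neg at h
        obtain ⟨h1, h2⟩ := h
        have hub := hmr b a u hxS h1 hRx
        have hud := hmc u b d h1 h2 hub
        exact hRy (hmr d u c h2 hyS hud)
      have hcover_row : ∀ w : β, (a, w) ∈ S ∨ (c, w) ∈ S := by
        intro w
        by_contra h
        push_neg at h
        obtain ⟨h1, h2⟩ := h
        have haw := hmc a b w hxS h1 hRx
        have hcw := hmr w a c h1 h2 haw
        exact hRy (hmc c w d h2 hyS hcw)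
      have hcol1 : ∀ u : α, 1 ≤ (univ.filter fun w => (u, w) ∈ S).card := by
        intro u
        rcases hcover_col u with h | h
        · exact Finset.card_pos.mpr ⟨b, Finset.mem_filter.mpr ⟨mem_univ _, h⟩⟩
        · exact Finset.card_pos.mpr ⟨d, Finset.mem_filter.mpr ⟨mem_univ _, h⟩⟩
      have hac_cover : Fintype.card β ≤ (univ.filter fun w => (a, w) ∈ S).card +
          (univ.filter fun w => (c, w) ∈ S).card := by
        have hcov : (univ : Finset β) ⊆ (univ.filter fun w => (a, w) ∈ S) ∪
            (univ.filter fun w => (c, w) ∈ S) := by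
          intro w _
          rcases hcover_row w with h | h
          · exact Finset.mem_union_left _ (Finset.mem_filter.mpr ⟨mem_univ _, h⟩)
          · exact Finset.mem_union_right _ (Finset.mem_filter.mpr ⟨mem_univ _, h⟩)
        calc Fintype.card β = (univ : Finset β).card := (Finset.card_univ).symm
          _ ≤ _ := le_trans (Finset.card_le_card hcov) (Finset.card_union_le _ _)
      have hsum := card_eq_sum_fibers S
      have hsplit : (∑ u ∈ univ \ {a, c}, (univ.filter fun w => (u, w) ∈ S).card) +
          ((univ.filter fun w => (a, w) ∈ S).card + (univ.filter fun w => (c, w) ∈ S).card) =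
          ∑ u : α, (univ.filter fun w => (u, w) ∈ S).card := by
        have := Finset.sum_sdiff (f := fun u => (univ.filter fun w => (u, w) ∈ S).card)
          (Finset.subset_univ {a, c})
        rw [Finset.sum_pair hac] at this
        simpa using this
      have hrest : (univ \ {a, c}).card • 1 ≤
          ∑ u ∈ univ \ {a, c}, (univ.filter fun w => (u, w) ∈ S).card := by
        apply Finset.card_nsmul_le_sum
        intro u hu
        exact hcol1 u
      have hcard_ac : ({a, c} : Finset α).card = 2 := by
        rw [Finset.card_insert_of_notMem (by simpa using hac), Finset.card_singleton]
      rw [smul_eq_mul, mul_one, Finset.card_sdiff_of_subset (Finset.subset_univ _), hcard_ac,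
        Finset.card_univ] at hrest
      omega

end TwoGraphs

end Aux

theorem stmt0 {α β : Type*} [Fintype α] [Fintype β]
    (G : SimpleGraph α) (H : SimpleGraph β)
    (hG : G.Connected) (hH : H.Connected) :
    vertConn G + vertConn H ≤ vertConn (G □ H) := by
  refine le_csInf ⟨(Finset.univ : Finset (α × β)).card, Finset.univ, rfl, Or.inr (by simp)⟩ ?_
  rintro n ⟨S, rfl, hprop⟩
  exact key hG hH S hprop
end

section
/- For every two integers n and k with 2 ≤ k ≤ n, the generalized k-connectivity of the complete graph K_n equals n − ⌈k/2⌉. -/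
open SimpleGraph

variable {V : Type*}

/-- helper: mod for values below 2*M -/
lemma mod2' {M x : ℕ} (h : x < 2*M) : x % M = if x < M then x else x - M := by
  split
  · exact Nat.mod_eq_of_lt ‹_›
  · rw [Nat.mod_eq_sub_mod (le_of_not_gt ‹_›), Nat.mod_eq_of_lt (by omega)]

lemma precon_delete {G : SimpleGraph V} {v w : V}
    (hR : (G \ fromEdgeSet {s(v,w)}).Reachable v w) (h : G.Preconnected) :
    (G \ fromEdgeSet {s(v,w)}).Preconnected := by
  intro a b
  obtain ⟨p⟩ := h a b
  induction p with
  | nil => exact Reachable.refl _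
  | @cons x y z h' p ih =>
    refine Reachable.trans ?_ ih
    by_cases he : s(x, y) = s(v, w)
    · rw [Sym2.eq_iff] at he
      rcases he with ⟨rfl, rfl⟩ | ⟨rfl, rfl⟩
      · exact hR
      · exact hR.symm
    · exact Adj.reachable (by simp [he, h', h'.ne])

lemma conn_card_le [Fintype V] (m : ℕ) : ∀ (G : SimpleGraph V), G.Connected →
    G.edgeSet.ncard = m → Fintype.card V ≤ m + 1 := by
  induction m using Nat.strong_induction_on with
  | _ m ih =>
  intro G hc hm
  classical
  by_cases ha : G.IsAcyclic
  · have h1 := IsTree.card_edgeFinset (G := G) ⟨hc, ha⟩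
    have h2 : G.edgeFinset.card = G.edgeSet.ncard := (Set.ncard_eq_toFinset_card' _).symm
    omega
  · rw [IsAcyclic] at ha
    push_neg at ha
    obtain ⟨u, c, hcyc⟩ := ha
    have hlen : 3 ≤ c.length := hcyc.three_le_length
    have hne : c.edges ≠ [] := by
      have : c.edges.length = c.length := c.length_edges
      intro h; rw [h] at this; simp at this; omega
    obtain ⟨e, he⟩ := List.exists_mem_of_ne_nil _ hne
    revert he
    induction e using Sym2.ind with
    | _ v w =>
    intro he
    have hR : (G \ fromEdgeSet {s(v,w)}).Reachable v w :=
      (adj_and_reachable_delete_edges_iff_exists_cycle.mpr ⟨u, c, hcyc, he⟩).2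
    have heG : s(v,w) ∈ G.edgeSet := c.edges_subset_edgeSet he
    set G' := G \ fromEdgeSet {s(v,w)} with hG'
    have hES : G'.edgeSet = G.edgeSet \ {s(v,w)} := by
      rw [hG', edgeSet_sdiff, edgeSet_fromEdgeSet, edgeSet_sdiff_sdiff_isDiag]
    have hm1 : 1 ≤ m := by
      have : 0 < G.edgeSet.ncard := (Set.ncard_pos (Set.toFinite _)).mpr ⟨_, heG⟩
      omega
    have hcard : G'.edgeSet.ncard = m - 1 := by
      rw [hES, Set.ncard_diff_singleton_of_mem heG]; omega
    have hconn' : G'.Connected := by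
      have := hc.nonempty
      exact ⟨precon_delete hR hc.preconnected⟩
    have := ih (m-1) (by omega) G' hconn' hcard
    omega

lemma isTree_of_connected_of_ncard [Fintype V] (G : SimpleGraph V) (hc : G.Connected)
    (h : G.edgeSet.ncard + 1 = Fintype.card V) : G.IsTree := by
  classical
  refine ⟨hc, ?_⟩
  by_contra ha
  rw [IsAcyclic] at ha
  push_neg at ha
  obtain ⟨u, c, hcyc⟩ := ha
  have hlen : 3 ≤ c.length := hcyc.three_le_length
  have hne : c.edges ≠ [] := by
    have : c.edges.length = c.length := c.length_edges
    intro h; rw [h] at this; simp at this; omega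
  obtain ⟨e, he⟩ := List.exists_mem_of_ne_nil _ hne
  revert he
  induction e using Sym2.ind with
  | _ v w =>
  intro he
  have hR : (G \ fromEdgeSet {s(v,w)}).Reachable v w :=
    (adj_and_reachable_delete_edges_iff_exists_cycle.mpr ⟨u, c, hcyc, he⟩).2
  have heG : s(v,w) ∈ G.edgeSet := c.edges_subset_edgeSet he
  set G' := G \ fromEdgeSet {s(v,w)} with hG'
  have hES : G'.edgeSet = G.edgeSet \ {s(v,w)} := by
    rw [hG', edgeSet_sdiff, edgeSet_fromEdgeSet, edgeSet_sdiff_sdiff_isDiag]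
  have hm1 : 1 ≤ G.edgeSet.ncard := (Set.ncard_pos (Set.toFinite _)).mpr ⟨_, heG⟩
  have hcard : G'.edgeSet.ncard = G.edgeSet.ncard - 1 := by
    rw [hES, Set.ncard_diff_singleton_of_mem heG]
  have hconn' : G'.Connected := by
    have := hc.nonempty
    exact ⟨precon_delete hR hc.preconnected⟩
  have := conn_card_le (G.edgeSet.ncard - 1) G' hconn' hcard
  omega

/-- Subgraph version: edge count from treeness. -/
lemma subgraph_tree_count [Fintype V] {G : SimpleGraph V} {H : G.Subgraph}
    (ht : H.coe.IsTree) : H.edgeSet.ncard + 1 = H.verts.ncard := by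
  classical
  have h1 := IsTree.card_edgeFinset ht
  have h2 : H.coe.edgeFinset.card = H.coe.edgeSet.ncard := (Set.ncard_eq_toFinset_card' _).symm
  have h3 : H.edgeSet.ncard = H.coe.edgeSet.ncard := by
    rw [← H.image_coe_edgeSet_coe,
      Set.ncard_image_of_injective _ (Sym2.map.injective Subtype.val_injective)]
  have h4 : Fintype.card H.verts = H.verts.ncard := by
    rw [← Nat.card_coe_set_eq, Nat.card_eq_fintype_card]
  omega

/-- Subgraph version: treeness from connectivity and counting. -/
lemma subgraph_tree_of_count [Fintype V] {G : SimpleGraph V} {H : G.Subgraph}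
    (hc : H.Connected) (h : H.edgeSet.ncard + 1 = H.verts.ncard) : H.coe.IsTree := by
  classical
  apply isTree_of_connected_of_ncard _ hc.coe
  have h3 : H.edgeSet.ncard = H.coe.edgeSet.ncard := by
    rw [← H.image_coe_edgeSet_coe,
      Set.ncard_image_of_injective _ (Sym2.map.injective Subtype.val_injective)]
  have h4 : Fintype.card H.verts = H.verts.ncard := by
    rw [← Nat.card_coe_set_eq, Nat.card_eq_fintype_card]
  omega

namespace STree

variable {G : SimpleGraph V}

/-- Build a walk from a chain list. -/
def mkWalk : (a : V) → (l : List V) → List.Chain G.Adj a l →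
    G.Walk a ((a :: l).getLast (List.cons_ne_nil a l))
  | _, [], _ => Walk.nil.copy rfl (by simp)
  | a, b :: l, h =>
    Walk.cons (List.chain_cons.mp h).1
      ((mkWalk b l (List.chain_cons.mp h).2).copy rfl (List.getLast_cons (List.cons_ne_nil b l)).symm)

@[simp] lemma mkWalk_support : ∀ (a : V) (l : List V) (h : List.Chain G.Adj a l),
    (mkWalk a l h).support = a :: l
  | _, [], _ => by simp [mkWalk]
  | a, b :: l, h => by
    simp [mkWalk, Walk.support_copy, mkWalk_support b l (List.chain_cons.mp h).2]

@[simp] lemma mkWalk_edges : ∀ (a : V) (l : List V) (h : List.Chain G.Adj a l),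
    (mkWalk a l h).edges = List.zipWith (fun x y => s(x,y)) (a :: l) l
  | _, [], _ => by simp [mkWalk]
  | a, b :: l, h => by
    simp [mkWalk, Walk.edges_copy, mkWalk_edges b l (List.chain_cons.mp h).2]

end STree

namespace STree

/-- zigzag vertex sequence within `Fin (2*m)`, as naturals. -/
def zig (m i u : ℕ) : ℕ :=
  if u % 2 = 0 then (2*m + i - u/2) % (2*m) else (i + u/2 + 1) % (2*m)

lemma zig_lt {m i : ℕ} (hm : 1 ≤ m) (u : ℕ) : zig m i u < 2*m := by
  unfold zig; split <;> exact Nat.mod_lt _ (by omega)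

lemma zig_inj {m i : ℕ} (hi : i < m) {u1 u2 : ℕ} (h1 : u1 < 2*m) (h2 : u2 < 2*m)
    (h : zig m i u1 = zig m i u2) : u1 = u2 := by
  unfold zig at h
  split_ifs at h <;>
    rw [mod2' (by omega), mod2' (by omega)] at h <;> split_ifs at h <;> omega

lemma zig_sum {m i u : ℕ} (hi : i < m) (hu : u + 1 < 2*m) :
    (zig m i u + zig m i (u+1)) % (2*m) = 2*i + (1 - u % 2) := by
  unfold zig
  rcases Nat.mod_two_eq_zero_or_one u with hb | hb
  · rw [if_pos hb, if_neg (by omega)]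
    have hs : u / 2 < m := by omega
    have h3 : (u+1)/2 = u/2 := by omega
    rw [h3, hb]
    have e2 : (i + u/2 + 1) % (2*m) = i + u/2 + 1 := Nat.mod_eq_of_lt (by omega)
    have e1 : (2*m + i - u/2) % (2*m) =
        if u/2 ≤ i then i - u/2 else 2*m + i - u/2 := by
      rw [mod2' (by omega)]; split_ifs <;> omega
    rw [e1, e2]
    split_ifs with h
    · rw [Nat.mod_eq_of_lt (by omega)]; omega
    · rw [mod2' (by omega)]; split_ifs <;> omega
  · rw [if_neg (by omega), if_pos (by omega)]
    have hs : u / 2 + 1 ≤ m := by omega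
    have h4 : (u+1)/2 = u/2 + 1 := by omega
    rw [h4, hb]
    have e2 : (i + u/2 + 1) % (2*m) = i + u/2 + 1 := Nat.mod_eq_of_lt (by omega)
    have e1 : (2*m + i - (u/2+1)) % (2*m) =
        if u/2 + 1 ≤ i then i - (u/2+1) else 2*m + i - (u/2+1) := by
      rw [mod2' (by omega)]; split_ifs <;> omega
    rw [e1, e2]
    split_ifs with h
    · rw [Nat.mod_eq_of_lt (by omega)]; omega
    · rw [mod2' (by omega)]; split_ifs <;> omega


/-- vertex sequence for the `i`-th inside tree, as indices in `range k`. -/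
def nu (k i t : ℕ) : ℕ := if t < k % 2 then 2*(k/2) else zig (k/2) i (t - k % 2)

lemma nu_lt {k i : ℕ} (hk : 2 ≤ k) (t : ℕ) : nu k i t < k := by
  unfold nu; split
  · omega
  · have := zig_lt (m := k/2) (i := i) (by omega) (t - k % 2); omega

lemma nu_zig_lt {k i t : ℕ} (hk : 2 ≤ k) (ht : k % 2 ≤ t) : nu k i t < 2*(k/2) := by
  unfold nu; rw [if_neg (by omega)]; exact zig_lt (by omega) _

lemma nu_inj {k i : ℕ} (hk : 2 ≤ k) (hi : i < k/2) {t1 t2 : ℕ} (h1 : t1 < k) (h2 : t2 < k)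
    (h : nu k i t1 = nu k i t2) : t1 = t2 := by
  unfold nu at h
  split_ifs at h with a b b
  · omega
  · have := zig_lt (m := k/2) (i := i) (by omega) (t2 - k % 2); omega
  · have := zig_lt (m := k/2) (i := i) (by omega) (t1 - k % 2); omega
  · have := zig_inj hi (u1 := t1 - k % 2) (u2 := t2 - k % 2) (by omega) (by omega) h
    omega

lemma nu_edge {k i t : ℕ} (hk : 2 ≤ k) (hi : i < k/2) (ht : t + 1 < k) :
    (nu k i t = 2*(k/2) ∧ nu k i (t+1) = i) ∨
    (nu k i t < 2*(k/2) ∧ nu k i (t+1) < 2*(k/2) ∧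
      ((nu k i t + nu k i (t+1)) % (2*(k/2)) = 2*i ∨
       (nu k i t + nu k i (t+1)) % (2*(k/2)) = 2*i + 1)) := by
  by_cases hc : t < k % 2
  · left
    have ht0 : t = 0 := by omega
    have hk1 : k % 2 = 1 := by omega
    constructor
    · unfold nu; rw [if_pos hc]
    · unfold nu; rw [if_neg (by omega)]
      have : t + 1 - k % 2 = 0 := by omega
      rw [this]
      unfold zig
      simp only [Nat.zero_mod, Nat.zero_div, if_pos rfl, Nat.sub_zero]
      rw [mod2' (by omega)]; split_ifs <;> omega
  · right
    have hx := nu_zig_lt (i := i) hk (t := t) (by omega)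
    have hy := nu_zig_lt (i := i) hk (t := t+1) (by omega)
    refine ⟨hx, hy, ?_⟩
    have e1 : nu k i t = zig (k/2) i (t - k % 2) := by unfold nu; rw [if_neg hc]
    have e2 : nu k i (t+1) = zig (k/2) i ((t - k % 2) + 1) := by
      unfold nu; rw [if_neg (by omega)]
      congr 1; omega
    rw [e1, e2, zig_sum hi (by omega)]
    omega

lemma nu_disj {k i j t u : ℕ} (hk : 2 ≤ k) (hi : i < k/2) (hj : j < k/2) (hij : i ≠ j)
    (ht : t + 1 < k) (hu : u + 1 < k) :
    ¬((nu k i t = nu k j u ∧ nu k i (t+1) = nu k j (u+1)) ∨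
      (nu k i t = nu k j (u+1) ∧ nu k i (t+1) = nu k j u)) := by
  have h1 := nu_edge hk hi ht
  have h2 := nu_edge hk hj hu
  rcases h1 with ⟨hx, hy⟩ | ⟨hx, hy, hs⟩ <;> rcases h2 with ⟨hx', hy'⟩ | ⟨hx', hy', hs'⟩
  · omega
  · omega
  · omega
  · rintro (⟨e1, e2⟩ | ⟨e1, e2⟩) <;>
    · have : nu k i t + nu k i (t+1) = nu k j u + nu k j (u+1) := by omega
      rw [this] at hs
      omega





variable {n : ℕ}

/-- star subgraph with hub `v` and leaves `S`. -/
def star (S : Finset (Fin n)) (v : Fin n) (hv : v ∉ S) : (⊤ : SimpleGraph (Fin n)).Subgraph where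
  verts := insert v ↑S
  Adj x y := (x = v ∧ y ∈ S) ∨ (y = v ∧ x ∈ S)
  adj_sub := by
    rintro x y (⟨rfl, h⟩ | ⟨rfl, h⟩) <;> simp only [top_adj] <;>
      [rintro rfl; rintro rfl] <;> exact hv h
  edge_vert := by rintro x y (⟨rfl, h⟩ | ⟨rfl, h⟩) <;> simp [h]
  symm := ⟨by rintro x y (⟨rfl, h⟩ | ⟨rfl, h⟩) <;> [right; left] <;> exact ⟨rfl, h⟩⟩

lemma star_verts (S : Finset (Fin n)) (v : Fin n) (hv : v ∉ S) :
    (star S v hv).verts = insert v ↑S := rfl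

lemma star_edgeSet (S : Finset (Fin n)) (v : Fin n) (hv : v ∉ S) :
    (star S v hv).edgeSet = (fun x => s(v, x)) '' ↑S := by
  ext e
  induction e using Sym2.ind with
  | _ x y =>
    rw [Subgraph.mem_edgeSet]
    constructor
    · rintro (⟨hx, h⟩ | ⟨hy, h⟩)
      · subst hx; exact ⟨y, h, rfl⟩
      · subst hy; exact ⟨x, h, Sym2.eq_swap⟩
    · rintro ⟨a, ha, he⟩
      rw [Sym2.eq_iff] at he
      rcases he with ⟨h1, h2⟩ | ⟨h1, h2⟩
      · left; exact ⟨h1.symm, by rwa [← h2]⟩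
      · right; exact ⟨h1.symm, by rwa [← h2]⟩

lemma star_isTree (S : Finset (Fin n)) (v : Fin n) (hv : v ∉ S) :
    (star S v hv).coe.IsTree := by
  apply subgraph_tree_of_count
  · rw [Subgraph.connected_iff]
    have hvv : v ∈ (star S v hv).verts := Set.mem_insert _ _
    constructor
    · constructor
      have key : ∀ (a : Fin n) (ha : a ∈ (star S v hv).verts),
          (star S v hv).coe.Reachable ⟨a, ha⟩ ⟨v, hvv⟩ := by
        intro a ha
        rcases Set.mem_insert_iff.mp ha with rfl | haS
        · exact Reachable.refl _
        · exact Adj.reachable (Subgraph.Adj.coe (Or.inr ⟨rfl, haS⟩))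
      intro a b
      exact (key a.1 a.2).trans (key b.1 b.2).symm
    · exact ⟨v, hvv⟩
  · rw [star_edgeSet, star_verts]
    have hinj : Function.Injective (fun x : Fin n => s(v, x)) := by
      intro a b h
      simp only [Sym2.eq_iff] at h
      rcases h with ⟨-, h⟩ | ⟨h1, h2⟩
      · exact h
      · exact h2.trans h1
    rw [Set.ncard_image_of_injective _ hinj, Set.ncard_coe_finset,
      Set.ncard_insert_of_notMem (by simpa using hv), Set.ncard_coe_finset]


variable {n k : ℕ} (hk2 : 2 ≤ k) (S : Finset (Fin n)) (hS : S.card = k)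

/-- the bijection `Fin k → S ⊆ Fin n`. -/
noncomputable def emb (t : Fin k) : Fin n := ((S.orderIsoOfFin hS) t : Fin n)

lemma emb_mem (t : Fin k) : emb S hS t ∈ S := ((S.orderIsoOfFin hS) t).2

lemma emb_inj : Function.Injective (emb S hS) := by
  intro a b h
  have := Subtype.ext (p := (· ∈ S)) h
  exact (S.orderIsoOfFin hS).injective this

/-- vertex sequence of the `i`-th inside tree. -/
noncomputable def gv (i : ℕ) (t : ℕ) : Fin n := emb S hS ⟨nu k i t, nu_lt hk2 t⟩

variable {i : ℕ}

lemma gv_injOn (hi : i < k/2) {t1 t2 : ℕ} (h1 : t1 < k) (h2 : t2 < k)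
    (h : gv hk2 S hS i t1 = gv hk2 S hS i t2) : t1 = t2 := by
  have := emb_inj S hS h
  rw [Fin.mk.injEq] at this
  exact nu_inj hk2 hi h1 h2 this

/-- the support list of the `i`-th inside tree. -/
noncomputable def Li (i : ℕ) : List (Fin n) := (List.range k).map (gv hk2 S hS i)

lemma Li_eq : Li hk2 S hS i = gv hk2 S hS i 0 ::
    (List.range (k-1)).map (gv hk2 S hS i ∘ Nat.succ) := by
  unfold Li
  obtain ⟨k', hk'⟩ : ∃ k', k = k' + 1 := ⟨k-1, by omega⟩
  subst hk'
  rw [List.range_succ_eq_map, List.map_cons, List.map_map]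
  simp

lemma Li_nodup (hi : i < k/2) : (Li hk2 S hS i).Nodup := by
  apply List.Nodup.map_on _ List.nodup_range
  intro t1 h1 t2 h2 h
  exact gv_injOn hk2 S hS hi (List.mem_range.mp h1) (List.mem_range.mp h2) h

lemma Li_chain (hi : i < k/2) : List.Chain (⊤ : SimpleGraph (Fin n)).Adj (gv hk2 S hS i 0)
    ((List.range (k-1)).map (gv hk2 S hS i ∘ Nat.succ)) := by
  have hnd : (gv hk2 S hS i 0 :: (List.range (k-1)).map (gv hk2 S hS i ∘ Nat.succ)).Nodup := by
    rw [← Li_eq hk2 S hS]; exact Li_nodup hk2 S hS hi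
  have hch : List.Chain' (· ≠ ·) (gv hk2 S hS i 0 ::
      (List.range (k-1)).map (gv hk2 S hS i ∘ Nat.succ)) := List.Pairwise.isChain hnd
  have hch2 : List.Chain (· ≠ ·) (gv hk2 S hS i 0)
      ((List.range (k-1)).map (gv hk2 S hS i ∘ Nat.succ)) := hch
  exact List.IsChain.imp (fun ⦃a b⦄ h => by simpa using h) hch2

/-- the `i`-th inside tree. -/
noncomputable def inside (hi : i < k/2) : (⊤ : SimpleGraph (Fin n)).Subgraph :=
  (mkWalk _ _ (Li_chain hk2 S hS hi)).toSubgraph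

lemma inside_verts (hi : i < k/2) : (inside hk2 S hS hi).verts = ↑S := by
  have h1 : (inside hk2 S hS hi).verts = {w | w ∈ Li hk2 S hS i} := by
    rw [inside, Walk.verts_toSubgraph, mkWalk_support, ← Li_eq]
  rw [h1]
  have hsub : (Li hk2 S hS i).toFinset ⊆ S := by
    intro x hx
    rw [List.mem_toFinset, Li, List.mem_map] at hx
    obtain ⟨t, -, rfl⟩ := hx
    exact emb_mem S hS _
  have hcard : (Li hk2 S hS i).toFinset.card = k := by
    rw [List.toFinset_card_of_nodup (Li_nodup hk2 S hS hi), Li, List.length_map,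
      List.length_range]
  have : (Li hk2 S hS i).toFinset = S := Finset.eq_of_subset_of_card_le hsub (by omega)
  ext x
  simp only [Set.mem_setOf_eq, Finset.coe_sort_coe, Finset.mem_coe]
  rw [← List.mem_toFinset, this]

lemma inside_edges (hi : i < k/2) {e : Sym2 (Fin n)} : e ∈ (inside hk2 S hS hi).edgeSet ↔
    ∃ t, t + 1 < k ∧ e = s(gv hk2 S hS i t, gv hk2 S hS i (t+1)) := by
  rw [inside, Walk.mem_edges_toSubgraph, mkWalk_edges]
  have hl : (gv hk2 S hS i 0 :: (List.range (k-1)).map (gv hk2 S hS i ∘ Nat.succ)) =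
      (List.range k).map (gv hk2 S hS i) := (Li_eq hk2 S hS).symm
  rw [hl]
  rw [List.mem_iff_getElem]
  constructor
  · rintro ⟨j, hj, he⟩
    rw [List.length_zipWith, List.length_map, List.length_map, List.length_range,
      List.length_range] at hj
    refine ⟨j, by omega, ?_⟩
    rw [List.getElem_zipWith] at he
    rw [← he]
    congr 1 <;> simp [List.getElem_map, List.getElem_range] <;> rfl
  · rintro ⟨t, ht, rfl⟩
    refine ⟨t, ?_, ?_⟩
    · rw [List.length_zipWith, List.length_map, List.length_map, List.length_range,
        List.length_range]; omega
    · rw [List.getElem_zipWith]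
      congr 1 <;> simp [List.getElem_map, List.getElem_range] <;> rfl

lemma inside_isPath (hi : i < k/2) : (mkWalk _ _ (Li_chain hk2 S hS hi)).IsPath := by
  rw [Walk.isPath_def, mkWalk_support, ← Li_eq]
  exact Li_nodup hk2 S hS hi

lemma inside_isTree (hi : i < k/2) : (inside hk2 S hS hi).coe.IsTree := by
  apply subgraph_tree_of_count
  · exact Walk.toSubgraph_connected _
  · have hv : (inside hk2 S hS hi).verts.ncard = k := by
      rw [inside_verts hk2 S hS hi, Set.ncard_coe_finset, hS]
    have hsup : (mkWalk _ _ (Li_chain hk2 S hS hi)).support.length = k := by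
      rw [mkWalk_support, ← Li_eq, Li, List.length_map, List.length_range]
    have hlen : (mkWalk _ _ (Li_chain hk2 S hS hi)).edges.length = k - 1 := by
      have h1 := (mkWalk _ _ (Li_chain hk2 S hS hi)).length_support
      have h2 := (mkWalk _ _ (Li_chain hk2 S hS hi)).length_edges
      omega
    have he : (inside hk2 S hS hi).edgeSet.ncard = k - 1 := by
      rw [inside, Walk.edgeSet_toSubgraph]
      have hnd : (mkWalk _ _ (Li_chain hk2 S hS hi)).edges.Nodup :=
        (inside_isPath hk2 S hS hi).isTrail.edges_nodup
      have : {e | e ∈ (mkWalk _ _ (Li_chain hk2 S hS hi)).edges} =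
          ↑(mkWalk _ _ (Li_chain hk2 S hS hi)).edges.toFinset := by
        ext e; simp
      rw [← Walk.coe_edges_toFinset, Set.ncard_coe_finset, List.toFinset_card_of_nodup hnd, hlen]
    omega



section disj

variable {n k : ℕ} (hk2 : 2 ≤ k) (S : Finset (Fin n)) (hS : S.card = k)

lemma star_star_disj {v w : Fin n} (hv : v ∉ S) (hw : w ∉ S) (hvw : v ≠ w) :
    (star S v hv).verts ∩ (star S w hw).verts = ↑S ∧
      Disjoint (star S v hv).edgeSet (star S w hw).edgeSet := by
  constructor
  · ext x
    simp only [star_verts, Set.mem_inter_iff, Set.mem_insert_iff, Finset.mem_coe]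
    constructor
    · rintro ⟨(rfl | h), (h2 | h2)⟩
      · exact absurd h2 hvw
      · exact h2
      · exact h
      · exact h
    · intro h; exact ⟨Or.inr h, Or.inr h⟩
  · rw [Set.disjoint_left]
    intro e he1 he2
    rw [star_edgeSet] at he1 he2
    obtain ⟨a, ha, rfl⟩ := he1
    obtain ⟨b, hb, hab⟩ := he2
    rw [Sym2.eq_iff] at hab
    rcases hab with ⟨h1, -⟩ | ⟨h1, -⟩
    · exact hvw h1.symm
    · subst h1; exact hw (by simpa using ha)

lemma star_inside_disj {v : Fin n} (hv : v ∉ S) {i : ℕ} (hi : i < k/2) :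
    (star S v hv).verts ∩ (inside hk2 S hS hi).verts = ↑S ∧
      Disjoint (star S v hv).edgeSet (inside hk2 S hS hi).edgeSet := by
  constructor
  · rw [star_verts, inside_verts]
    exact Set.inter_eq_self_of_subset_right (Set.subset_insert _ _)
  · rw [Set.disjoint_left]
    intro e he1 he2
    rw [star_edgeSet] at he1
    rw [inside_edges] at he2
    obtain ⟨a, ha, rfl⟩ := he1
    obtain ⟨t, ht, hte⟩ := he2
    rw [Sym2.eq_iff] at hte
    rcases hte with ⟨hv1, -⟩ | ⟨hv1, -⟩ <;>
    · rw [hv1] at hv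
      exact hv (emb_mem S hS _)

lemma inside_inside_disj {i j : ℕ} (hi : i < k/2) (hj : j < k/2) (hij : i ≠ j) :
    (inside hk2 S hS hi).verts ∩ (inside hk2 S hS hj).verts = ↑S ∧
      Disjoint (inside hk2 S hS hi).edgeSet (inside hk2 S hS hj).edgeSet := by
  constructor
  · rw [inside_verts, inside_verts, Set.inter_self]
  · rw [Set.disjoint_left]
    intro e he1 he2
    rw [inside_edges] at he1 he2
    obtain ⟨t, ht, rfl⟩ := he1
    obtain ⟨u, hu, hte⟩ := he2
    rw [Sym2.eq_iff] at hte
    apply nu_disj hk2 hi hj hij ht hu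
    have hinj : ∀ {a b : ℕ} (h1 : nu k i a < k) (h2 : nu k j b < k),
        gv hk2 S hS i a = gv hk2 S hS j b → nu k i a = nu k j b := by
      intro a b h1 h2 h
      have := emb_inj S hS h
      rwa [Fin.mk.injEq] at this
    rcases hte with ⟨h1, h2⟩ | ⟨h1, h2⟩
    · exact Or.inl ⟨hinj (nu_lt hk2 _) (nu_lt hk2 _) h1, hinj (nu_lt hk2 _) (nu_lt hk2 _) h2⟩
    · exact Or.inr ⟨hinj (nu_lt hk2 _) (nu_lt hk2 _) h1, hinj (nu_lt hk2 _) (nu_lt hk2 _) h2⟩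

end disj

section assembly

variable {n k : ℕ}

lemma lower_mem (hk2 : 2 ≤ k) (hkn : k ≤ n) (S : Finset (Fin n)) (hS : S.card = k) : ∃ T : Fin (n - k + k/2) → (⊤ : SimpleGraph (Fin n)).Subgraph,
    (∀ i, IsSTree ⊤ ↑S (T i)) ∧ PairwiseInternallyDisjoint ⊤ ↑S T := by
  have hcc : Sᶜ.card = n - k := by
    rw [Finset.card_compl, hS]; simp
  set ov : Fin (n - k) → Fin n := fun j => ((Sᶜ.orderIsoOfFin hcc) j : Fin n) with hov
  have hov_mem : ∀ j, ov j ∉ S := fun j => Finset.mem_compl.mp ((Sᶜ.orderIsoOfFin hcc) j).2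
  have hov_inj : Function.Injective ov := by
    intro a b h
    exact (Sᶜ.orderIsoOfFin hcc).injective (Subtype.ext h)
  refine ⟨fun idx => if h : (idx : ℕ) < n - k then star S (ov ⟨idx, h⟩) (hov_mem _)
    else inside hk2 S hS (i := (idx : ℕ) - (n - k)) (by have := idx.isLt; omega), ?_, ?_⟩
  · intro idx
    dsimp only
    by_cases h : (idx : ℕ) < n - k
    · rw [dif_pos h]
      exact ⟨Set.subset_insert _ _, star_isTree S _ _⟩
    · rw [dif_neg h]
      refine ⟨?_, inside_isTree hk2 S hS _⟩
      rw [inside_verts]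
  · intro i j hij
    dsimp only
    by_cases h1 : (i : ℕ) < n - k <;> by_cases h2 : (j : ℕ) < n - k
    · rw [dif_pos h1, dif_pos h2]
      exact star_star_disj S (hov_mem _) (hov_mem _)
        (fun he => hij (Fin.ext (by simpa [Fin.mk.injEq] using hov_inj he)))
    · rw [dif_pos h1, dif_neg h2]
      exact star_inside_disj hk2 S hS (hov_mem _) _
    · rw [dif_neg h1, dif_pos h2]
      obtain ⟨hv, he⟩ := star_inside_disj hk2 S hS (hov_mem ⟨(j : ℕ), h2⟩)
        (i := (i : ℕ) - (n - k)) (by omega)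
      exact ⟨by rw [Set.inter_comm]; exact hv, he.symm⟩
    · rw [dif_neg h1, dif_neg h2]
      exact inside_inside_disj hk2 S hS _ _ (by omega)

end assembly


section upper

variable {n k : ℕ}

lemma upper_bd (hk2 : 2 ≤ k) (hkn : k ≤ n) (S : Finset (Fin n)) (hS : S.card = k)
    {r : ℕ} (T : Fin r → (⊤ : SimpleGraph (Fin n)).Subgraph)
    (hT : ∀ i, IsSTree ⊤ ↑S (T i)) (hP : PairwiseInternallyDisjoint ⊤ ↑S T) :
    r ≤ (n - k) + k / 2 := by
  classical
  set P : Fin r → Prop := fun i => (T i).verts ⊆ ↑S with hPdef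
  set I : Finset (Fin r) := Finset.univ.filter P with hI
  set O : Finset (Fin r) := Finset.univ.filter (fun i => ¬ P i) with hO
  have hsplit : I.card + O.card = r := by
    rw [hI, hO, Finset.card_filter_add_card_filter_not, Finset.card_fin]
  -- outside trees
  have hOcard : O.card ≤ n - k := by
    have hwit : ∀ i ∈ O, ∃ v, v ∈ (T i).verts ∧ v ∉ ↑S := by
      intro i hi
      rw [hO, Finset.mem_filter] at hi
      exact Set.not_subset.mp hi.2
    choose wit hwit1 hwit2 using hwit
    have : O.card ≤ Sᶜ.card := by
      apply Finset.card_le_card_of_injOn (fun i => if h : i ∈ O then wit i h else ⟨0, by omega⟩)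
      · intro i hi
        rw [Finset.mem_coe] at hi
        rw [Finset.mem_coe, Finset.mem_compl]
        simp only [dif_pos hi]
        exact fun hc => hwit2 i hi (by simpa using hc)
      · intro i hi j hj hij
        simp only [Finset.mem_coe] at hi hj
        simp only [dif_pos hi, dif_pos hj] at hij
        by_contra hne
        have h1 := (hP i j hne).1
        have : wit i hi ∈ (T i).verts ∩ (T j).verts := ⟨hwit1 i hi, hij ▸ hwit1 j hj⟩
        rw [h1] at this
        exact hwit2 i hi this
    rwa [Finset.card_compl, hS, Fintype.card_fin] at this
  -- inside trees
  have hIcard : I.card ≤ k / 2 := by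
    have hverts : ∀ i ∈ I, (T i).verts = ↑S := by
      intro i hi
      rw [hI, Finset.mem_filter] at hi
      exact le_antisymm hi.2 (hT i).1
    have hcnt : ∀ i ∈ I, (T i).edgeSet.ncard = k - 1 := by
      intro i hi
      have h1 := subgraph_tree_count (hT i).2
      rw [hverts i hi, Set.ncard_coe_finset, hS] at h1
      omega
    set Esub : Set (Sym2 (Fin n)) :=
      Sym2.map (Subtype.val) '' (⊤ : SimpleGraph {x // x ∈ S}).edgeSet with hEsub
    have hEcard : Esub.ncard = k * (k-1) / 2 := by
      rw [hEsub, Set.ncard_image_of_injective _ (Sym2.map.injective Subtype.val_injective),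
        Set.ncard_eq_toFinset_card']
      have : (⊤ : SimpleGraph {x // x ∈ S}).edgeSet.toFinset =
          (⊤ : SimpleGraph {x // x ∈ S}).edgeFinset := rfl
      rw [this, card_edgeFinset_top_eq_card_choose_two, Fintype.card_coe, hS,
        Nat.choose_two_right]
    have hsubE : ∀ i ∈ I, (T i).edgeSet ⊆ Esub := by
      intro i hi e he
      induction e using Sym2.ind with
      | _ x y =>
        rw [Subgraph.mem_edgeSet] at he
        have hxy : x ≠ y := by simpa using (T i).adj_sub he
        have hx : x ∈ S := by
          have := (T i).edge_vert he; rwa [hverts i hi, Finset.mem_coe] at this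
        have hy : y ∈ S := by
          have := (T i).edge_vert he.symm; rwa [hverts i hi, Finset.mem_coe] at this
        refine ⟨s(⟨x, hx⟩, ⟨y, hy⟩), ?_, rfl⟩
        rw [SimpleGraph.mem_edgeSet, top_adj]
        exact fun hc => hxy (congrArg Subtype.val hc)
    -- disjoint union counting
    have hsum : I.card * (k - 1) ≤ k * (k-1) / 2 := by
      have hFi : ∀ i : Fin r, ((T i).edgeSet.toFinite.toFinset).card = (T i).edgeSet.ncard :=
        fun i => (Set.ncard_eq_toFinset_card _ _).symm
      have hbi : (I.biUnion (fun i => (T i).edgeSet.toFinite.toFinset)) ⊆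
          Esub.toFinite.toFinset := by
        intro e he
        rw [Finset.mem_biUnion] at he
        obtain ⟨i, hi, hei⟩ := he
        rw [Set.Finite.mem_toFinset] at hei ⊢
        exact hsubE i hi hei
      have hdis : ∀ i ∈ I, ∀ j ∈ I, i ≠ j →
          Disjoint ((T i).edgeSet.toFinite.toFinset) ((T j).edgeSet.toFinite.toFinset) := by
        intro i _ j _ hij
        rw [Set.Finite.disjoint_toFinset]
        exact (hP i j hij).2
      have h1 := Finset.card_le_card hbi
      rw [Finset.card_biUnion hdis] at h1
      have h2 : ∑ i ∈ I, ((T i).edgeSet.toFinite.toFinset).card = I.card * (k-1) := by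
        rw [Finset.sum_congr rfl (fun i hi => by rw [hFi i, hcnt i hi])]
        simp [Finset.sum_const, mul_comm]
      rw [h2] at h1
      rwa [← Set.ncard_eq_toFinset_card _ _, hEcard] at h1
    -- arithmetic
    by_contra hq
    push_neg at hq
    rcases Nat.even_or_odd k with ⟨a, ha⟩ | ⟨a, ha⟩
    · have ha2 : k / 2 = a := by omega
      have he1 : k * (k-1) / 2 = a * (k-1) := by
        have : k * (k-1) = 2 * (a * (k-1)) := by rw [ha]; ring
        rw [this, Nat.mul_div_cancel_left _ two_pos]
      rw [he1] at hsum
      have := Nat.le_of_mul_le_mul_right (le_trans (Nat.mul_le_mul_right (k-1)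
        (by omega : a + 1 ≤ I.card)) hsum) (by omega : 0 < k - 1)
      omega
    · have ha2 : k / 2 = a := by omega
      have ha1 : 1 ≤ a := by omega
      have he1 : k * (k-1) / 2 = k * a := by
        have h5 : k - 1 = 2*a := by omega
        have : k * (k-1) = 2 * (k * a) := by rw [h5]; ring
        rw [this, Nat.mul_div_cancel_left _ two_pos]
      rw [he1] at hsum
      have h3 : (a + 1) * (k - 1) ≤ I.card * (k-1) :=
        Nat.mul_le_mul_right _ (by omega)
      have h4 : (a+1) * (k-1) = k * a + a := by
        have h5 : k - 1 = 2*a := by omega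
        rw [h5, ha]; ring
      omega
  omega

end upper


section finale

variable {n k : ℕ}

lemma treeConn_eq (hk2 : 2 ≤ k) (hkn : k ≤ n) (S : Finset (Fin n)) (hS : S.card = k) :
    treeConn (⊤ : SimpleGraph (Fin n)) ↑S = n - k + k / 2 := by
  unfold treeConn
  apply le_antisymm
  · apply csSup_le
    · exact ⟨0, Fin.elim0, fun i => i.elim0, fun i => i.elim0⟩
    · rintro r ⟨T, hT, hP⟩
      exact upper_bd hk2 hkn S hS T hT hP
  · apply le_csSup
    · refine ⟨n - k + k/2, fun r hr => ?_⟩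
      obtain ⟨T, hT, hP⟩ := hr
      exact upper_bd hk2 hkn S hS T hT hP
    · exact lower_mem hk2 hkn S hS


end finale

end STree

theorem stmt1 (n k : ℕ) (hk2 : 2 ≤ k) (hkn : k ≤ n) :
    gkConn (⊤ : SimpleGraph (Fin n)) k = n - (k + 1) / 2 := by
  unfold gkConn
  have hBeq : {r | ∃ S : Finset (Fin n), S.card = k ∧ treeConn (⊤ : SimpleGraph (Fin n)) ↑S = r} = {n - k + k/2} := by
    ext r
    simp only [Set.mem_setOf_eq, Set.mem_singleton_iff]
    constructor
    · rintro ⟨S, hS, rfl⟩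
      exact STree.treeConn_eq hk2 hkn S hS
    · rintro rfl
      obtain ⟨S, -, hS⟩ := Finset.exists_subset_card_eq (s := (Finset.univ : Finset (Fin n))) (n := k)
        (by rw [Finset.card_univ, Fintype.card_fin]; exact hkn)
      exact ⟨S, hS, STree.treeConn_eq hk2 hkn S hS⟩
  rw [hBeq, csInf_singleton]
  omega
end

section
/- Let a ≤ b be positive integers and k an integer with 2 ≤ k ≤ a+b. If k ≤ b − a + 2, then κ_k(K_{a,b}) = a. -/
open SimpleGraph

variable {V : Type*}

theorem reachable_constant {W : Type*} {H : SimpleGraph W} {c : W → Prop}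
    (hc : ∀ u v, H.Adj u v → (c u ↔ c v)) {u v : W} (h : H.Reachable u v) : c u ↔ c v := by
  obtain ⟨p⟩ := h
  induction p with
  | nil => exact Iff.rfl
  | cons h q ih => exact (hc _ _ h).trans ih

theorem isTree_of_parent {W : Type*} {H : SimpleGraph W} (f : W → W) (ρ : W → ℕ) (r : W)
    (hroot : f r = r)
    (hstep : ∀ u, u ≠ r → H.Adj u (f u) ∧ ρ (f u) < ρ u)
    (hadj : ∀ v w, H.Adj v w → w = f v ∨ v = f w) : H.IsTree := by
  have key : ∀ n u, ρ u ≤ n → H.Reachable u r := by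
    intro n
    induction n with
    | zero =>
      intro u hu
      rcases eq_or_ne u r with rfl | hne
      · exact Reachable.refl u
      · exact absurd ((hstep u hne).2.trans_le hu) (Nat.not_lt_zero _)
    | succ n ih =>
      intro u hu
      rcases eq_or_ne u r with rfl | hne
      · exact Reachable.refl u
      · obtain ⟨hA, hlt⟩ := hstep u hne
        exact hA.reachable.trans (ih (f u) (by omega))
  have hreach : ∀ u, H.Reachable u r := fun u => key (ρ u) u le_rfl
  have hmono : ∀ u, ρ (f u) ≤ ρ u := fun u => by
    rcases eq_or_ne u r with rfl | hne
    · rw [hroot]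
    · exact (hstep u hne).2.le
  have hiter : ∀ (n : ℕ) u, ρ (f^[n] u) ≤ ρ u := by
    intro n
    induction n with
    | zero => simp
    | succ n ih =>
      intro u
      rw [Function.iterate_succ_apply]
      exact (ih (f u)).trans (hmono u)
  haveI : Nonempty W := ⟨r⟩
  constructor
  · exact Connected.mk (fun u w => (hreach u).trans (hreach w).symm)
  · rw [isAcyclic_iff_forall_adj_isBridge]
    suffices keyb : ∀ v w, H.Adj v w → w = f v → H.IsBridge s(v, w) by
      intro v w hvw
      rcases hadj v w hvw with h1 | h1
      · exact keyb v w hvw h1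
      · rw [Sym2.eq_swap]; exact keyb w v hvw.symm h1
    rintro v w hvw rfl
    have hvr : v ≠ r := by
      rintro rfl
      rw [hroot] at hvw
      exact H.irrefl hvw
    have hρ : ρ (f v) < ρ v := (hstep v hvr).2
    rw [isBridge_iff]
    intro hre
    set c : W → Prop := fun u => ∃ n, f^[n] u = v with hcdef
    have hnotcw : ¬ c (f v) := by
      rintro ⟨n, hn⟩
      have := hiter n (f v)
      rw [hn] at this
      omega
    have hpres : ∀ u u', (H \ fromEdgeSet {s(v, f v)}).Adj u u' → (c u ↔ c u') := by
      have main : ∀ u u', (H \ fromEdgeSet {s(v, f v)}).Adj u u' → u' = f u → (c u ↔ c u') := by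
        rintro u u' hadj' rfl
        rw [sdiff_adj, fromEdgeSet_adj] at hadj'
        obtain ⟨hH, hne⟩ := hadj'
        constructor
        · rintro ⟨n, hn⟩
          cases n with
          | zero =>
            simp only [Function.iterate_zero, id_eq] at hn
            subst hn
            exact absurd ⟨rfl, fun h => hρ.ne (congrArg ρ h.symm)⟩ hne
          | succ n =>
            exact ⟨n, by rwa [Function.iterate_succ_apply] at hn⟩
        · rintro ⟨n, hn⟩
          exact ⟨n + 1, by rwa [Function.iterate_succ_apply]⟩
      intro u u' h'
      rcases hadj u u' (h'.1) with h1 | h1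
      · exact main u u' h' h1
      · exact (main u' u h'.symm h1).symm
    exact hnotcw ((reachable_constant hpres hre).mp ⟨0, rfl⟩)
open SimpleGraph

/-- Whether the private `B`-vertex is needed for hub `x`. -/
def useY (a : ℕ) {b : ℕ} (S : Set (Fin a ⊕ Fin b)) (x : Fin a) : Prop :=
  ∃ u, u ≠ x ∧ Sum.inl u ∈ S

/-- The spider tree with hub `x` and private vertex `y`. -/
def bipTree {a b : ℕ} (S : Set (Fin a ⊕ Fin b)) (x : Fin a) (y : Fin b) :
    (completeBipartiteGraph (Fin a) (Fin b)).Subgraph where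
  verts := S ∪ {Sum.inl x} ∪ {v | useY a S x ∧ v = Sum.inr y}
  Adj v w :=
    (v = Sum.inl x ∧ ∃ w', w = Sum.inr w' ∧ Sum.inr w' ∈ S) ∨
    (w = Sum.inl x ∧ ∃ w', v = Sum.inr w' ∧ Sum.inr w' ∈ S) ∨
    (v = Sum.inr y ∧ useY a S x ∧ (w = Sum.inl x ∨ ∃ u, u ≠ x ∧ Sum.inl u ∈ S ∧ w = Sum.inl u)) ∨
    (w = Sum.inr y ∧ useY a S x ∧ (v = Sum.inl x ∨ ∃ u, u ≠ x ∧ Sum.inl u ∈ S ∧ v = Sum.inl u))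
  adj_sub := by
    rintro v w (⟨rfl, w', rfl, -⟩ | ⟨rfl, w', rfl, -⟩ | ⟨rfl, -, (rfl | ⟨u, -, -, rfl⟩)⟩ |
      ⟨rfl, -, (rfl | ⟨u, -, -, rfl⟩)⟩) <;> simp
  edge_vert := by
    rintro v w (⟨rfl, -⟩ | ⟨-, w', rfl, hw'⟩ | ⟨rfl, hu, -⟩ | ⟨-, hu, (rfl | ⟨u, hux, huS, rfl⟩)⟩)
    · exact Or.inl (Or.inr rfl)
    · exact Or.inl (Or.inl hw')
    · exact Or.inr ⟨hu, rfl⟩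
    · exact Or.inl (Or.inr rfl)
    · exact Or.inl (Or.inl huS)
  symm := by
    constructor
    rintro v w (h | h | h | h)
    · exact Or.inr (Or.inl h)
    · exact Or.inl h
    · exact Or.inr (Or.inr (Or.inr h))
    · exact Or.inr (Or.inr (Or.inl h))

lemma bipTree_subset {a b : ℕ} (S : Set (Fin a ⊕ Fin b)) (x : Fin a) (y : Fin b) :
    S ⊆ (bipTree S x y).verts := fun v hv => Or.inl (Or.inl hv)

lemma bipTree_isTree {a b : ℕ} (S : Set (Fin a ⊕ Fin b)) (x : Fin a) (y : Fin b) :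
    (bipTree S x y).coe.IsTree := by
  classical
  have hxmem : Sum.inl x ∈ (bipTree S x y).verts := Or.inl (Or.inr rfl)
  have hymem : ∀ v : (bipTree S x y).verts, (∃ u, v.1 = Sum.inl u ∧ u ≠ x) →
      Sum.inr y ∈ (bipTree S x y).verts := by
    rintro ⟨v, hv⟩ ⟨u, rfl, hux⟩
    rcases hv with (hS | hx) | hy
    · exact Or.inr ⟨⟨u, hux, hS⟩, rfl⟩
    · exact absurd (Sum.inl.inj hx) hux
    · exact absurd hy.2 (by simp)
  refine isTree_of_parent
    (fun v => if h : ∃ u, v.1 = Sum.inl u ∧ u ≠ x then ⟨Sum.inr y, hymem v h⟩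
      else ⟨Sum.inl x, hxmem⟩)
    (fun v => match v.1 with
      | Sum.inl u => if u = x then 0 else 2
      | Sum.inr _ => 1)
    ⟨Sum.inl x, hxmem⟩ ?_ ?_ ?_
  · beta_reduce
    rw [dif_neg]
    rintro ⟨u, hu, hux⟩
    exact hux (Sum.inl.inj hu).symm
  · rintro ⟨v, hv⟩ hne
    match v, hv with
    | Sum.inl u, hv =>
      have hux : u ≠ x := by
        rintro rfl
        exact hne (Subtype.ext rfl)
      have hmemS : Sum.inl u ∈ S := by
        rcases hv with (hS | hx) | hy
        · exact hS
        · exact absurd (Sum.inl.inj hx) hux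
        · exact absurd hy.2 (by simp)
      beta_reduce
      rw [dif_pos ⟨u, rfl, hux⟩]
      constructor
      · exact Or.inr (Or.inr (Or.inr ⟨rfl, ⟨u, hux, hmemS⟩, Or.inr ⟨u, hux, hmemS, rfl⟩⟩))
      · simp [hux]
    | Sum.inr w, hv =>
      beta_reduce
      rw [dif_neg (by rintro ⟨u, hu, -⟩; exact (by simp at hu : False))]
      constructor
      · rcases hv with (hS | hx) | hy
        · exact Or.inr (Or.inl ⟨rfl, w, rfl, hS⟩)
        · exact absurd hx (by simp)
        · exact Or.inr (Or.inr (Or.inl ⟨hy.2, hy.1, Or.inl rfl⟩))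
      · simp
  · rintro ⟨v, hv⟩ ⟨w, hw⟩ hA
    rw [Subgraph.coe_adj] at hA
    rcases hA with ⟨rfl, w', rfl, -⟩ | ⟨rfl, w', hveq, -⟩ | ⟨rfl, husey, (rfl | ⟨u, hux, huS, rfl⟩)⟩ |
        ⟨rfl, husey, (rfl | ⟨u, hux, huS, rfl⟩)⟩
    · right
      beta_reduce
      rw [dif_neg (by rintro ⟨u, hu, -⟩; exact (by simp at hu : False))]
    · left
      subst hveq
      beta_reduce
      rw [dif_neg (by rintro ⟨u, hu, -⟩; exact (by simp at hu : False))]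
    · left
      beta_reduce
      rw [dif_neg (by rintro ⟨u, hu, -⟩; exact (by simp at hu : False))]
    · right
      beta_reduce
      rw [dif_pos ⟨u, rfl, hux⟩]
    · right
      beta_reduce
      rw [dif_neg (by rintro ⟨u', hu', -⟩; exact (by simp at hu' : False))]
    · left
      beta_reduce
      rw [dif_pos ⟨u, rfl, hux⟩]


lemma bipTree_adj_classify {a b : ℕ} {S : Set (Fin a ⊕ Fin b)} {x : Fin a} {y : Fin b}
    {v w : Fin a ⊕ Fin b} (h : (bipTree S x y).Adj v w) :
    ∃ u wb, s(v, w) = s(Sum.inl u, Sum.inr wb) ∧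
      ((u = x ∧ Sum.inr wb ∈ S) ∨ (wb = y ∧ useY a S x)) := by
  rcases h with ⟨rfl, w', rfl, hm⟩ | ⟨rfl, w', rfl, hm⟩ | ⟨rfl, husey, (rfl | ⟨u, hux, huS, rfl⟩)⟩ |
      ⟨rfl, husey, (rfl | ⟨u, hux, huS, rfl⟩)⟩
  · exact ⟨x, w', rfl, Or.inl ⟨rfl, hm⟩⟩
  · exact ⟨x, w', Sym2.eq_swap, Or.inl ⟨rfl, hm⟩⟩
  · exact ⟨x, y, Sym2.eq_swap, Or.inr ⟨rfl, husey⟩⟩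
  · exact ⟨u, y, Sym2.eq_swap, Or.inr ⟨rfl, husey⟩⟩
  · exact ⟨x, y, rfl, Or.inr ⟨rfl, husey⟩⟩
  · exact ⟨u, y, rfl, Or.inr ⟨rfl, husey⟩⟩

lemma bipTree_disjoint {a b : ℕ} (S : Set (Fin a ⊕ Fin b)) {x x' : Fin a} {y y' : Fin b}
    (hxx : x ≠ x') (hyS : useY a S x → Sum.inr y ∉ S) (hyS' : useY a S x' → Sum.inr y' ∉ S)
    (hyy : useY a S x → useY a S x' → y ≠ y') :
    (bipTree S x y).verts ∩ (bipTree S x' y').verts = S ∧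
      Disjoint (bipTree S x y).edgeSet (bipTree S x' y').edgeSet := by
  constructor
  · apply Set.Subset.antisymm
    · rintro v ⟨hv1, hv2⟩
      rcases hv1 with (hS | hx) | hy
      · exact hS
      · rcases hv2 with (hS | hx') | hy'
        · exact hS
        · rw [Set.mem_singleton_iff] at hx hx'
          exact absurd (Sum.inl.inj (hx ▸ hx')) hxx
        · rw [Set.mem_singleton_iff] at hx
          exact absurd (hx ▸ hy'.2) (by simp)
      · rcases hv2 with (hS | hx') | hy'
        · exact absurd (hy.2 ▸ hS) (hyS hy.1)
        · rw [Set.mem_singleton_iff] at hx'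
          exact absurd (hx' ▸ hy.2) (by simp)
        · exact absurd (Sum.inr.inj (hy.2.symm.trans hy'.2)) (hyy hy.1 hy'.1)
    · exact fun v hv => ⟨Or.inl (Or.inl hv), Or.inl (Or.inl hv)⟩
  · rw [Set.disjoint_left]
    intro e he1 he2
    induction e with
    | h v w =>
      rw [Subgraph.mem_edgeSet] at he1 he2
      obtain ⟨u, wb, hvw, hcase⟩ := bipTree_adj_classify he1
      obtain ⟨u', wb', hvw', hcase'⟩ := bipTree_adj_classify he2
      rw [hvw] at hvw'
      have huu : u' = u := by
        rcases Sym2.eq_iff.mp hvw' with ⟨h1, h2⟩ | ⟨h1, h2⟩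
        · exact (Sum.inl.inj h1).symm
        · exact absurd h1 (by simp)
      have hww : wb' = wb := by
        rcases Sym2.eq_iff.mp hvw' with ⟨h1, h2⟩ | ⟨h1, h2⟩
        · exact (Sum.inr.inj h2).symm
        · exact absurd h1 (by simp)
      subst huu
      subst hww
      rcases hcase with ⟨h0, hmem⟩ | ⟨h0, husey⟩ <;>
        rcases hcase' with ⟨h1, hmem'⟩ | ⟨h1, husey'⟩
      · exact hxx (h0.symm.trans h1)
      · exact (hyS' husey') (h1 ▸ hmem)
      · exact (hyS husey) (h0 ▸ hmem')
      · exact hyy husey husey' (h0.symm.trans h1)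

lemma subgraph_exists_adj {G : SimpleGraph V} {T : G.Subgraph} (hc : T.coe.Connected)
    {v₁ v₂ : V} (h₁ : v₁ ∈ T.verts) (h₂ : v₂ ∈ T.verts) (hne : v₁ ≠ v₂) :
    ∃ z, T.Adj v₁ z := by
  obtain ⟨p⟩ := hc.preconnected ⟨v₁, h₁⟩ ⟨v₂, h₂⟩
  cases p with
  | nil => exact absurd rfl hne
  | cons h q => exact ⟨_, (Subgraph.coe_adj _ _ _).mp h⟩

lemma treeConn_bddAbove [Fintype V] [DecidableEq V] (G : SimpleGraph V) (S : Set V)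
    (hS : ∃ v₁ ∈ S, ∃ v₂ ∈ S, v₁ ≠ v₂) :
    BddAbove {r | ∃ T : Fin r → G.Subgraph,
      (∀ i, IsSTree G S (T i)) ∧ PairwiseInternallyDisjoint G S T} := by
  classical
  refine ⟨Fintype.card (Sym2 V), ?_⟩
  rintro r ⟨T, hT, hD⟩
  obtain ⟨v₁, hv₁, v₂, hv₂, hne⟩ := hS
  have hedge : ∀ i, ∃ e, e ∈ (T i).edgeSet := by
    intro i
    obtain ⟨hsub, htree⟩ := hT i
    obtain ⟨z, hz⟩ := subgraph_exists_adj htree.isConnected (hsub hv₁) (hsub hv₂) hne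
    exact ⟨s(v₁, z), hz⟩
  choose e he using hedge
  have hinj : Function.Injective e := by
    intro i j hij
    by_contra hne'
    exact Set.disjoint_left.mp (hD i j hne').2 (he i) (hij ▸ he j)
  simpa using Fintype.card_le_of_injective e hinj

lemma treeConn_nonempty (G : SimpleGraph V) (S : Set V) :
    (0 : ℕ) ∈ {r | ∃ T : Fin r → G.Subgraph,
      (∀ i, IsSTree G S (T i)) ∧ PairwiseInternallyDisjoint G S T} :=
  ⟨Fin.elim0, fun i => i.elim0, fun i _ _ => i.elim0⟩

lemma lower_bound (a b k : ℕ) (ha : 1 ≤ a) (hab : a ≤ b) (hk2 : 2 ≤ k)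
    (hk : k + a ≤ b + 2) (S : Finset (Fin a ⊕ Fin b)) (hS : S.card = k) :
    a ≤ treeConn (completeBipartiteGraph (Fin a) (Fin b)) ↑S := by
  classical
  set SA : Finset (Fin a) := Finset.univ.filter (fun u => Sum.inl u ∈ S) with hSA
  set SB : Finset (Fin b) := Finset.univ.filter (fun w => Sum.inr w ∈ S) with hSB
  have hpq : SA.card + SB.card = k := by
    have hrepr : S = SA.image Sum.inl ∪ SB.image Sum.inr := by
      ext v
      cases v <;> simp [hSA, hSB]
    rw [← hS, hrepr, Finset.card_union_of_disjoint (by simp [Finset.disjoint_left]),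
      Finset.card_image_of_injective _ Sum.inl_injective,
      Finset.card_image_of_injective _ Sum.inr_injective]
  have hqb : SB.card ≤ b := by
    simpa using Finset.card_le_card (Finset.subset_univ SB)
  set U : Finset (Fin a) := Finset.univ.filter (fun x => ∃ u, u ≠ x ∧ Sum.inl u ∈ S) with hU
  have hUcard : U.card ≤ b - SB.card := by
    rcases Nat.lt_or_ge SA.card 2 with hp | hp
    · interval_cases h : SA.card
      · have : U = ∅ := by
          rw [Finset.eq_empty_iff_forall_notMem]
          rintro x hx
          rw [hU, Finset.mem_filter] at hx
          obtain ⟨-, u, -, huS⟩ := hx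
          have : u ∈ SA := by simp [hSA, huS]
          simp [Finset.card_eq_zero.mp h] at this
        rw [this]
        simp
      · obtain ⟨u₁, hu₁⟩ := Finset.card_eq_one.mp h
        have hsub : U ⊆ Finset.univ.erase u₁ := by
          intro x hx
          rw [hU, Finset.mem_filter] at hx
          obtain ⟨-, u, hux, huS⟩ := hx
          have : u ∈ SA := by simp [hSA, huS]
          rw [hu₁, Finset.mem_singleton] at this
          subst this
          exact Finset.mem_erase.mpr ⟨fun hh => hux hh.symm, Finset.mem_univ x⟩
        have := Finset.card_le_card hsub
        rw [Finset.card_erase_of_mem (Finset.mem_univ u₁), Finset.card_univ,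
          Fintype.card_fin] at this
        omega
    · have := Finset.card_le_card (Finset.subset_univ U)
      rw [Finset.card_univ, Fintype.card_fin] at this
      omega
  -- get an embedding from U into the complement of SB
  have hcard : Fintype.card {x // x ∈ U} ≤ Fintype.card {w // w ∈ SBᶜ} := by
    rw [Fintype.card_coe, Fintype.card_coe, Finset.card_compl, Fintype.card_fin]
    exact hUcard
  obtain ⟨e⟩ := Function.Embedding.nonempty_of_card_le hcard
  set y : Fin a → Fin b := fun x => if h : x ∈ U then (e ⟨x, h⟩ : Fin b) else ⟨0, by omega⟩
    with hy
  have hyS : ∀ x, x ∈ U → Sum.inr (y x) ∉ S := by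
    intro x hx hmem
    have h1 : (e ⟨x, hx⟩ : Fin b) ∈ SBᶜ := (e ⟨x, hx⟩).2
    rw [hy] at hmem
    simp only [dif_pos hx] at hmem
    rw [Finset.mem_compl] at h1
    exact h1 (Finset.mem_filter.mpr ⟨Finset.mem_univ _, hmem⟩)
  have hyinj : ∀ x x', x ∈ U → x' ∈ U → y x = y x' → x = x' := by
    intro x x' hx hx' hxy
    rw [hy] at hxy
    simp only [dif_pos hx, dif_pos hx'] at hxy
    simpa using congrArg Subtype.val (e.injective (Subtype.ext hxy))
  have hUuse : ∀ x : Fin a, useY a (↑S : Set (Fin a ⊕ Fin b)) x → x ∈ U := by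
    intro x hu
    obtain ⟨u, hux, huS⟩ := hu
    rw [hU, Finset.mem_filter]
    exact ⟨Finset.mem_univ x, u, hux, huS⟩
  have hmem : a ∈ {r | ∃ T : Fin r → (completeBipartiteGraph (Fin a) (Fin b)).Subgraph,
      (∀ i, IsSTree (completeBipartiteGraph (Fin a) (Fin b)) ↑S (T i)) ∧
      PairwiseInternallyDisjoint (completeBipartiteGraph (Fin a) (Fin b)) ↑S T} := by
    refine ⟨fun i => bipTree (↑S) i (y i), fun i => ⟨bipTree_subset _ _ _, bipTree_isTree _ _ _⟩,
      fun i j hij => ?_⟩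
    exact bipTree_disjoint (↑S) hij
      (fun hu => hyS i (hUuse i hu))
      (fun hu => hyS j (hUuse j hu))
      (fun hui huj hyy => hij (hyinj i j (hUuse i hui) (hUuse j huj) hyy))
  have hbdd := treeConn_bddAbove (completeBipartiteGraph (Fin a) (Fin b)) ↑S ?_
  · exact le_csSup hbdd hmem
  · -- two distinct elements of S
    obtain ⟨v₁, hv₁, v₂, hv₂, hne⟩ := Finset.one_lt_card.mp (by omega : 1 < S.card)
    exact ⟨v₁, hv₁, v₂, hv₂, hne⟩

theorem stmt2 (a b k : ℕ) (ha : 1 ≤ a) (hab : a ≤ b)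
    (hk2 : 2 ≤ k) (hkab : k ≤ a + b) (h : k ≤ b - a + 2) :
    gkConn (completeBipartiteGraph (Fin a) (Fin b)) k = a := by
  classical
  have hk' : k + a ≤ b + 2 := by omega
  have hlow : ∀ S : Finset (Fin a ⊕ Fin b), S.card = k →
      a ≤ treeConn (completeBipartiteGraph (Fin a) (Fin b)) ↑S :=
    fun S hS => lower_bound a b k ha hab hk2 hk' S hS
  have hup : ∃ S₀ : Finset (Fin a ⊕ Fin b), S₀.card = k ∧
      treeConn (completeBipartiteGraph (Fin a) (Fin b)) ↑S₀ ≤ a := by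
    rcases le_or_gt k b with hkb | hkb
    · obtain ⟨t, -, ht⟩ := Finset.exists_subset_card_eq (s := (Finset.univ : Finset (Fin b))) (n := k) (by simpa)
      have hcardim : (t.image Sum.inr : Finset (Fin a ⊕ Fin b)).card = k := by
        rw [Finset.card_image_of_injective _ Sum.inr_injective, ht]
      refine ⟨t.image Sum.inr, hcardim, ?_⟩
      apply csSup_le ⟨0, treeConn_nonempty _ _⟩
      rintro r ⟨T, hT, hD⟩
      obtain ⟨v₁, hv₁, v₂, hv₂, hne⟩ := Finset.one_lt_card.mp
        (by rw [hcardim]; omega : 1 < (t.image Sum.inr : Finset (Fin a ⊕ Fin b)).card)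
      have hex : ∀ i, ∃ u : Fin a, Sum.inl u ∈ (T i).verts := by
        intro i
        obtain ⟨hsub, htree⟩ := hT i
        obtain ⟨z, hz⟩ := subgraph_exists_adj htree.isConnected (hsub hv₁) (hsub hv₂) hne
        obtain ⟨w, rfl⟩ : ∃ w, v₁ = Sum.inr w := by
          obtain ⟨w, -, hw⟩ := Finset.mem_image.mp hv₁
          exact ⟨w, hw.symm⟩
        have hG := (T i).adj_sub hz
        match z, hz, hG with
        | Sum.inl u, hz, _ => exact ⟨u, (T i).edge_vert hz.symm⟩
        | Sum.inr u, _, hG => simp at hG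
      choose g hg using hex
      have hginj : Function.Injective g := by
        intro i j hij
        by_contra hne'
        have h1 : Sum.inl (g i) ∈ (T i).verts ∩ (T j).verts := ⟨hg i, hij ▸ hg j⟩
        rw [(hD i j hne').1] at h1
        simp at h1
      simpa using Fintype.card_le_of_injective g hginj
    · have ha1 : a = 1 := by omega
      have hkb1 : k = b + 1 := by omega
      subst ha1
      have hb1 : 0 < b := by omega
      refine ⟨Finset.univ, ?_, ?_⟩
      · rw [Finset.card_univ]
        simp only [Fintype.card_sum, Fintype.card_fin]
        omega
      · apply csSup_le ⟨0, treeConn_nonempty _ _⟩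
        rintro r ⟨T, hT, hD⟩
        by_contra hr
        push_neg at hr
        have hedge : ∀ i : Fin r, (T i).Adj (Sum.inr ⟨0, hb1⟩) (Sum.inl 0) := by
          intro i
          obtain ⟨hsub, htree⟩ := hT i
          have h₁ : (Sum.inr ⟨0, hb1⟩ : Fin 1 ⊕ Fin b) ∈ (T i).verts := hsub (by simp)
          have h₂ : (Sum.inl 0 : Fin 1 ⊕ Fin b) ∈ (T i).verts := hsub (by simp)
          obtain ⟨z, hz⟩ := subgraph_exists_adj htree.isConnected h₁ h₂ (by simp)
          have hG := (T i).adj_sub hz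
          match z, hz, hG with
          | Sum.inl u, hz, _ => exact (Fin.eq_zero u) ▸ hz
          | Sum.inr u, _, hG => simp at hG
        have hne01 : (⟨0, by omega⟩ : Fin r) ≠ ⟨1, by omega⟩ := by
          simp [Fin.ext_iff]
        exact Set.disjoint_left.mp (hD _ _ hne01).2
          (Subgraph.mem_edgeSet.mpr (hedge ⟨0, by omega⟩))
          (Subgraph.mem_edgeSet.mpr (hedge ⟨1, by omega⟩))
  obtain ⟨S₀, hS₀, hS₀le⟩ := hup
  have hmem : a ∈ {r | ∃ S : Finset (Fin a ⊕ Fin b), S.card = k ∧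
      treeConn (completeBipartiteGraph (Fin a) (Fin b)) ↑S = r} :=
    ⟨S₀, hS₀, le_antisymm hS₀le (hlow S₀ hS₀)⟩
  exact le_antisymm (Nat.sInf_le hmem)
    (le_csInf ⟨a, hmem⟩ (by rintro r ⟨S, hSc, rfl⟩; exact hlow S hSc))
end

section
/- Let G be a connected graph with at least three vertices. If G has two adjacent vertices each of minimum degree δ(G), then κ_3(G) ≤ δ(G) − 1. -/
open SimpleGraph

variable {V : Type*}

lemma exists_two_adj {α : Type*} {H : SimpleGraph α} (hH : H.Preconnected)
    {u v w : α} (huv : u ≠ v) (huw : u ≠ w) (hvw : v ≠ w) :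
    ∃ x y, H.Adj u x ∧ H.Adj v y ∧ s(u, x) ≠ s(v, y) := by
  classical
  obtain ⟨p0⟩ := hH u w
  obtain ⟨p, hp⟩ := p0.toPath
  obtain ⟨x, hux, p', hpeq⟩ := Walk.exists_eq_cons_of_ne huw p
  have hxmem : x ∈ p.support := by rw [hpeq]; simp
  by_cases hvmem : v ∈ p.support
  · set d := p.dropUntil v hvmem with hd
    obtain ⟨z, hvz, d', hdeq⟩ := Walk.exists_eq_cons_of_ne hvw d
    have hzu : z ≠ u := by
      have hspec := p.take_spec hvmem
      have hnd : p.support.Nodup := hp.support_nodup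
      rw [← hspec, Walk.support_append] at hnd
      have hdisj := List.disjoint_of_nodup_append hnd
      have hu1 : u ∈ (p.takeUntil v hvmem).support := Walk.start_mem_support _
      have hz2 : z ∈ d.support.tail := by
        rw [hdeq, Walk.support_cons]
        exact d'.start_mem_support
      intro h
      apply hdisj hu1
      show u ∈ d.support.tail
      exact h ▸ hz2
    refine ⟨x, z, hux, hvz, fun h => ?_⟩
    rw [Sym2.eq_iff] at h
    rcases h with ⟨h1, _⟩ | ⟨h1, _⟩
    · exact huv h1
    · exact hzu h1.symm
  · have hxv : x ≠ v := fun h => hvmem (h ▸ hxmem)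
    obtain ⟨q0⟩ := hH v u
    obtain ⟨y, hvy, _q, _⟩ := Walk.exists_eq_cons_of_ne (Ne.symm huv) q0
    refine ⟨x, y, hux, hvy, fun h => ?_⟩
    have hvmem' : v ∈ s(u, x) := by rw [h]; exact Sym2.mem_mk_left v y
    rw [Sym2.mem_iff] at hvmem'
    rcases hvmem' with h1 | h1
    · exact huv h1.symm
    · exact hxv h1.symm

theorem stmt5 {V : Type*} [Fintype V] [DecidableEq V] (G : SimpleGraph V)
    [DecidableRel G.Adj] (hconn : G.Connected) (hcard : 3 ≤ Fintype.card V)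
    (u v : V) (huv : G.Adj u v)
    (hu : G.degree u = G.minDegree) (hv : G.degree v = G.minDegree) :
    gkConn G 3 ≤ G.minDegree - 1 := by
  classical
  have hδ : 1 ≤ G.minDegree := by
    rw [← hu]; exact (G.degree_pos_iff_exists_adj u).2 ⟨v, huv⟩
  have huvne : u ≠ v := G.ne_of_adj huv
  obtain ⟨w, hw⟩ : ∃ w, w ∉ ({u, v} : Finset V) := by
    by_contra h
    push_neg at h
    have hsub : (Finset.univ : Finset V) ⊆ {u, v} := fun x _ => h x
    have h1 := Finset.card_le_card hsub
    have h2 : ({u, v} : Finset V).card ≤ 2 :=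
      (Finset.card_insert_le _ _).trans (by simp)
    rw [Finset.card_univ] at h1
    omega
  simp only [Finset.mem_insert, Finset.mem_singleton, not_or] at hw
  obtain ⟨hwu, hwv⟩ := hw
  set S : Finset V := {u, v, w} with hS
  have hScard : S.card = 3 := by
    rw [hS, Finset.card_insert_of_notMem (by simp [huvne, Ne.symm hwu]),
      Finset.card_insert_of_notMem (by simp [Ne.symm hwv]), Finset.card_singleton]
  refine le_trans (Nat.sInf_le ⟨S, hScard, rfl⟩) ?_
  apply csSup_le
  · exact ⟨0, Fin.elim0, fun i => i.elim0, fun i => i.elim0⟩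
  rintro r ⟨T, hT, hdisj⟩
  -- the finsets of edges of each tree incident to u or v
  set F : Fin r → Finset (Sym2 V) := fun i =>
    ((T i).edgeSet ∩ (G.incidenceSet u ∪ G.incidenceSet v)).toFinset with hF
  have hFsub : ∀ i, F i ⊆ G.incidenceFinset u ∪ G.incidenceFinset v := by
    intro i e he
    rw [hF, Set.mem_toFinset] at he
    rcases he.2 with h | h
    · exact Finset.mem_union_left _ (by rw [mem_incidenceFinset]; exact h)
    · exact Finset.mem_union_right _ (by rw [mem_incidenceFinset]; exact h)
  have hFdisj : ∀ i j, i ≠ j → Disjoint (F i) (F j) := by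
    intro i j hij
    rw [Finset.disjoint_left]
    intro e hei hej
    rw [hF, Set.mem_toFinset] at hei hej
    exact Set.disjoint_left.1 ((hdisj i j hij).2) hei.1 hej.1
  have hFcard : ∀ i, 2 ≤ (F i).card := by
    intro i
    obtain ⟨hsubS, htree⟩ := hT i
    have huT : u ∈ (T i).verts := hsubS (by simp [hS])
    have hvT : v ∈ (T i).verts := hsubS (by simp [hS])
    have hwT : w ∈ (T i).verts := hsubS (by simp [hS])
    obtain ⟨x, y, hax, hay, hne⟩ :=
      exists_two_adj (H := (T i).coe) htree.isConnected.preconnected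
        (u := ⟨u, huT⟩) (v := ⟨v, hvT⟩) (w := ⟨w, hwT⟩)
        (fun h => huvne (congrArg Subtype.val h))
        (fun h => hwu (congrArg Subtype.val h).symm)
        (fun h => hwv (congrArg Subtype.val h).symm)
    have hax' : (T i).Adj u x.val := hax
    have hay' : (T i).Adj v y.val := hay
    have he1 : s(u, x.val) ∈ F i := by
      rw [hF, Set.mem_toFinset]
      exact ⟨Subgraph.mem_edgeSet.2 hax',
        Or.inl (G.mk'_mem_incidenceSet_left_iff.2 ((T i).adj_sub hax'))⟩
    have he2 : s(v, y.val) ∈ F i := by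
      rw [hF, Set.mem_toFinset]
      exact ⟨Subgraph.mem_edgeSet.2 hay',
        Or.inr (G.mk'_mem_incidenceSet_left_iff.2 ((T i).adj_sub hay'))⟩
    have hneG : s(u, x.val) ≠ s(v, y.val) := by
      intro h
      apply hne
      apply Sym2.map.injective (Subtype.val_injective)
      rwa [Sym2.map_pair_eq, Sym2.map_pair_eq]
    exact Finset.one_lt_card.2 ⟨_, he1, _, he2, hneG⟩
  have hsum : ∑ i : Fin r, (F i).card = (Finset.univ.biUnion F).card :=
    (Finset.card_biUnion (fun i _ j _ h => hFdisj i j h)).symm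
  have h2r : 2 * r ≤ ∑ i : Fin r, (F i).card := by
    calc 2 * r = ∑ _i : Fin r, 2 := by simp [Finset.sum_const, Finset.card_univ, mul_comm]
    _ ≤ _ := Finset.sum_le_sum (fun i _ => hFcard i)
  have hbig : (Finset.univ.biUnion F).card ≤ (G.incidenceFinset u ∪ G.incidenceFinset v).card := by
    apply Finset.card_le_card
    intro e he
    rw [Finset.mem_biUnion] at he
    obtain ⟨i, _, hei⟩ := he
    exact hFsub i hei
  have hinter : G.incidenceFinset u ∩ G.incidenceFinset v = {s(u, v)} := by
    ext e
    simp only [Finset.mem_inter, mem_incidenceFinset, Finset.mem_singleton]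
    constructor
    · rintro ⟨⟨he, hue⟩, ⟨_, hve⟩⟩
      exact (Sym2.mem_and_mem_iff huvne).1 ⟨hue, hve⟩
    · rintro rfl
      exact ⟨⟨huv, Sym2.mem_mk_left _ _⟩, huv, Sym2.mem_mk_right _ _⟩
  have hcu := Finset.card_union_add_card_inter (G.incidenceFinset u) (G.incidenceFinset v)
  rw [hinter, Finset.card_singleton, G.card_incidenceFinset_eq_degree,
    G.card_incidenceFinset_eq_degree, hu, hv] at hcu
  omega
end

section
/- For every connected graph G with at least three vertices, κ_3(G) ≤ κ(G), where κ(G) is the vertex connectivity of G. -/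
open SimpleGraph

variable {V : Type*}

/-- In a connected subgraph, every vertex that is not alone has a neighbor. -/
lemma exists_nbr_aux {G : SimpleGraph V} {T : G.Subgraph} (hconn : T.coe.Connected)
    {a b : V} (ha : a ∈ T.verts) (hb : b ∈ T.verts) (hne : a ≠ b) :
    ∃ c, T.Adj a c := by
  obtain ⟨w⟩ := hconn.preconnected ⟨a, ha⟩ ⟨b, hb⟩
  cases w with
  | nil => exact absurd rfl hne
  | cons h p => exact ⟨_, (Subgraph.coe_adj _ _ _).mp h⟩

lemma mem_P3 [DecidableEq V] {x y z a b : V} (ha : a ∈ ({x, y, z} : Set V)) (hb : b ∈ ({x, y, z} : Set V))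
    (hne : a ≠ b) :
    s(a, b) ∈ ({s(x, y), s(x, z), s(y, z)} : Finset (Sym2 V)) := by
  rcases ha with rfl | rfl | rfl <;> rcases hb with rfl | rfl | rfl <;>
    simp_all [Sym2.eq_swap]

/-- A connected subgraph on vertex set `{x,y,z}` has two distinct edges among the three
possible pairs. -/
lemma exists_two_edges [DecidableEq V] {G : SimpleGraph V} {T : G.Subgraph} {x y z : V}
    (hxy : x ≠ y) (hxz : x ≠ z) (hyz : y ≠ z)
    (hv : T.verts = {x, y, z}) (hconn : T.coe.Connected) :
    ∃ e1 e2 : Sym2 V, e1 ≠ e2 ∧ e1 ∈ T.edgeSet ∧ e2 ∈ T.edgeSet ∧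
      e1 ∈ ({s(x, y), s(x, z), s(y, z)} : Finset (Sym2 V)) ∧
      e2 ∈ ({s(x, y), s(x, z), s(y, z)} : Finset (Sym2 V)) := by
  have hx : x ∈ T.verts := by rw [hv]; simp
  have hy : y ∈ T.verts := by rw [hv]; simp
  have hz : z ∈ T.verts := by rw [hv]; simp
  obtain ⟨c1, hc1⟩ := exists_nbr_aux hconn hx hy hxy
  have hc1v : c1 ∈ T.verts := hc1.snd_mem
  have hc1x : c1 ≠ x := (T.adj_sub hc1).ne'
  suffices h : ∀ t, t ∈ T.verts → t ≠ x → t ≠ c1 → ∃ e1 e2 : Sym2 V,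
      e1 ≠ e2 ∧ e1 ∈ T.edgeSet ∧ e2 ∈ T.edgeSet ∧
      e1 ∈ ({s(x, y), s(x, z), s(y, z)} : Finset (Sym2 V)) ∧
      e2 ∈ ({s(x, y), s(x, z), s(y, z)} : Finset (Sym2 V)) by
    have hc1m : c1 ∈ ({x, y, z} : Set V) := hv ▸ hc1v
    rcases hc1m with rfl | rfl | rfl
    · exact absurd rfl hc1x
    · exact h z hz (Ne.symm hxz) (Ne.symm hyz)
    · exact h y hy (Ne.symm hxy) hyz
  intro t ht htx htc1
  obtain ⟨c2, hc2⟩ := exists_nbr_aux hconn ht hx (by exact htx)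
  have hc2v : c2 ∈ T.verts := hc2.snd_mem
  have hc2t : t ≠ c2 := (T.adj_sub hc2).ne
  refine ⟨s(x, c1), s(t, c2), ?_, hc1, hc2, ?_, ?_⟩
  · intro he
    rw [Sym2.eq_iff] at he
    rcases he with ⟨rfl, -⟩ | ⟨-, h2⟩
    · exact htx rfl
    · exact htc1 h2.symm
  · exact mem_P3 (hv ▸ hx) (hv ▸ hc1v) (Ne.symm hc1x)
  · exact mem_P3 (hv ▸ ht) (hv ▸ hc2v) hc2t

/-- If `a, b` are not reachable from each other after deleting `W`, then any connected
subgraph containing both must contain a vertex of `W`. -/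
lemma tree_meets_cut {G : SimpleGraph V} {W : Set V}
    {a b : ↥(((⊤ : G.Subgraph).deleteVerts W).verts)}
    (hnr : ¬ ((⊤ : G.Subgraph).deleteVerts W).coe.Reachable a b)
    {T : G.Subgraph} (hT : T.coe.Connected) (haT : a.1 ∈ T.verts) (hbT : b.1 ∈ T.verts) :
    ∃ w ∈ T.verts, w ∈ W := by
  by_contra hcon
  push_neg at hcon
  let f : T.coe →g ((⊤ : G.Subgraph).deleteVerts W).coe :=
    { toFun := fun v => ⟨v.1, ⟨Set.mem_univ _, hcon v.1 v.2⟩⟩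
      map_rel' := by
        intro u v huv
        rw [Subgraph.coe_adj] at huv ⊢
        rw [Subgraph.deleteVerts_adj]
        exact ⟨Set.mem_univ _, hcon u.1 u.2, Set.mem_univ _, hcon v.1 v.2, T.adj_sub huv⟩ }
  have hr := (hT.preconnected ⟨a.1, haT⟩ ⟨b.1, hbT⟩).map f
  have h1 : f ⟨a.1, haT⟩ = a := Subtype.ext rfl
  have h2 : f ⟨b.1, hbT⟩ = b := Subtype.ext rfl
  rw [h1, h2] at hr
  exact hnr hr

lemma r_le_cut [DecidableEq V] {G : SimpleGraph V} [Fintype V] {W : Finset V}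
    {a b : ↥(((⊤ : G.Subgraph).deleteVerts (↑W : Set V)).verts)}
    (hnr : ¬ ((⊤ : G.Subgraph).deleteVerts (↑W : Set V)).coe.Reachable a b)
    {z : V} (hzW : z ∉ W) {r : ℕ} (T : Fin r → G.Subgraph)
    (hTree : ∀ i, IsSTree G ↑({a.1, b.1, z} : Finset V) (T i))
    (hdisj : PairwiseInternallyDisjoint G ↑({a.1, b.1, z} : Finset V) T) :
    r ≤ W.card := by
  classical
  have hmem : ∀ i : Fin r, ∃ w ∈ (T i).verts, w ∈ (↑W : Set V) := by
    intro i
    refine tree_meets_cut hnr (hTree i).2.isConnected ?_ ?_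
    · exact (hTree i).1 (by simp)
    · exact (hTree i).1 (by simp)
  choose w hwT hwW using hmem
  have hinj : Function.Injective (fun i : Fin r => (⟨w i, hwW i⟩ : ↥W)) := by
    intro i j hij
    by_contra hne
    have h1 := (hdisj i j hne).1
    have : w i ∈ (T i).verts ∩ (T j).verts := by
      refine ⟨hwT i, ?_⟩
      have : w i = w j := congrArg Subtype.val hij
      rw [this]; exact hwT j
    rw [h1] at this
    have hW : w i ∈ W := hwW i
    have haW : a.1 ∉ W := fun h => a.2.2 h
    have hbW : b.1 ∉ W := fun h => b.2.2 h
    simp only [Finset.coe_insert, Finset.coe_singleton, Set.mem_insert_iff,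
      Set.mem_singleton_iff] at this
    rcases this with h | h | h <;> rw [h] at hW
    · exact haW hW
    · exact hbW hW
    · exact hzW hW
  calc r = Fintype.card (Fin r) := (Fintype.card_fin r).symm
    _ ≤ Fintype.card ↥W := Fintype.card_le_of_injective _ hinj
    _ = W.card := Fintype.card_coe W

lemma at_most_one_small [DecidableEq V] {G : SimpleGraph V} {x y z : V}
    (hxy : x ≠ y) (hxz : x ≠ z) (hyz : y ≠ z) {T₁ T₂ : G.Subgraph}
    (h1 : T₁.verts = {x, y, z}) (h2 : T₂.verts = {x, y, z})
    (hc1 : T₁.coe.Connected) (hc2 : T₂.coe.Connected)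
    (hd : Disjoint T₁.edgeSet T₂.edgeSet) : False := by
  obtain ⟨a1, a2, ha12, ha1, ha2, ha1P, ha2P⟩ := exists_two_edges hxy hxz hyz h1 hc1
  obtain ⟨b1, b2, hb12, hb1, hb2, hb1P, hb2P⟩ := exists_two_edges hxy hxz hyz h2 hc2
  have d11 : a1 ≠ b1 := fun h => Set.disjoint_left.mp hd ha1 (h ▸ hb1)
  have d12 : a1 ≠ b2 := fun h => Set.disjoint_left.mp hd ha1 (h ▸ hb2)
  have d21 : a2 ≠ b1 := fun h => Set.disjoint_left.mp hd ha2 (h ▸ hb1)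
  have d22 : a2 ≠ b2 := fun h => Set.disjoint_left.mp hd ha2 (h ▸ hb2)
  have hsub : ({a1, a2, b1, b2} : Finset (Sym2 V)) ⊆ {s(x, y), s(x, z), s(y, z)} := by
    intro e he
    simp only [Finset.mem_insert, Finset.mem_singleton] at he
    rcases he with rfl | rfl | rfl | rfl <;> assumption
  have hcard : ({a1, a2, b1, b2} : Finset (Sym2 V)).card = 4 := by
    rw [Finset.card_insert_of_notMem (by simp [ha12, d11, d12]),
      Finset.card_insert_of_notMem (by simp [d21, d22]),
      Finset.card_insert_of_notMem (by simp [hb12]), Finset.card_singleton]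
  have h3 : ({s(x, y), s(x, z), s(y, z)} : Finset (Sym2 V)).card ≤ 3 := by
    apply (Finset.card_insert_le _ _).trans
    apply Nat.succ_le_succ
    apply (Finset.card_insert_le _ _).trans
    simp
  have := Finset.card_le_card hsub
  omega

lemma r_le_card [DecidableEq V] [Fintype V] {G : SimpleGraph V} {S : Finset V}
    (hS : S.card = 3) {r : ℕ} (T : Fin r → G.Subgraph)
    (hTree : ∀ i, IsSTree G ↑S (T i)) (hdisj : PairwiseInternallyDisjoint G ↑S T) :
    r ≤ Fintype.card V - 2 := by
  classical
  obtain ⟨x, y, z, hxy, hxz, hyz, rfl⟩ := Finset.card_eq_three.mp hS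
  set S : Finset V := {x, y, z} with hSdef
  let P : Fin r → Prop := fun i => ∃ v ∈ (T i).verts, v ∉ S
  have hsplit : Fintype.card {i // ¬ P i} = r - Fintype.card {i // P i} := by
    rw [Fintype.card_subtype_compl, Fintype.card_fin]
  have hPle : Fintype.card {i // P i} ≤ Fintype.card V - 3 := by
    have hchoice : ∀ i : {i // P i}, ∃ v, v ∈ (T i.1).verts ∧ v ∉ S := fun i => i.2
    choose v hvT hvS using hchoice
    have hinj : Function.Injective
        (fun i : {i // P i} => (⟨v i, Finset.mem_sdiff.mpr ⟨Finset.mem_univ _, hvS i⟩⟩ :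
          ↥(Finset.univ \ S))) := by
      intro i j hij
      by_contra hne
      have hne' : i.1 ≠ j.1 := fun h => hne (Subtype.ext h)
      have h1 := (hdisj i.1 j.1 hne').1
      have hv' : v i ∈ (T i.1).verts ∩ (T j.1).verts := by
        refine ⟨hvT i, ?_⟩
        have : v i = v j := congrArg Subtype.val hij
        rw [this]; exact hvT j
      rw [h1] at hv'
      exact hvS i hv'
    calc Fintype.card {i // P i} ≤ Fintype.card ↥(Finset.univ \ S) :=
          Fintype.card_le_of_injective _ hinj
      _ = (Finset.univ \ S).card := Fintype.card_coe _
      _ = Fintype.card V - 3 := by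
          rw [Finset.card_sdiff_of_subset (Finset.subset_univ _), Finset.card_univ, hS]
  have hnPle : Fintype.card {i // ¬ P i} ≤ 1 := by
    refine Fintype.card_le_one_iff.mpr fun i j => ?_
    by_contra hne
    have hne' : i.1 ≠ j.1 := fun h => hne (Subtype.ext h)
    have hverts : ∀ m : Fin r, ¬ P m → (T m).verts = ({x, y, z} : Set V) := by
      intro m hm
      apply Set.eq_of_subset_of_subset
      · intro w hw
        by_contra hwS
        exact hm ⟨w, hw, by simpa [hSdef] using hwS⟩
      · intro w hw
        apply (hTree m).1
        simpa [hSdef] using hw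
    exact at_most_one_small hxy hxz hyz (hverts i.1 i.2) (hverts j.1 j.2)
      (hTree i.1).2.isConnected (hTree j.1).2.isConnected (hdisj i.1 j.1 hne').2
  have hr : r = Fintype.card {i // P i} + Fintype.card {i // ¬ P i} := by
    have := Fintype.card_subtype_le P  -- card {P} ≤ card (Fin r)
    rw [Fintype.card_fin] at this
    omega
  have h3 : 3 ≤ Fintype.card V := by
    calc 3 = S.card := hS.symm
      _ ≤ Fintype.card V := Finset.card_le_univ S |>.trans_eq (Finset.card_univ)
  omega

theorem stmt6 {V : Type*} [Fintype V] (G : SimpleGraph V)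
    (hconn : G.Connected) (hcard : 3 ≤ Fintype.card V) :
    gkConn G 3 ≤ vertConn G := by
  classical
  set n := Fintype.card V with hn
  set k := vertConn G with hk
  suffices h : ∃ S : Finset V, S.card = 3 ∧ treeConn G ↑S ≤ k by
    obtain ⟨S, hS3, hSle⟩ := h
    exact le_trans (Nat.sInf_le ⟨S, hS3, rfl⟩) hSle
  have hzero : ∀ (S : Set V), (0 : ℕ) ∈ {r | ∃ T : Fin r → G.Subgraph,
      (∀ i, IsSTree G S (T i)) ∧ PairwiseInternallyDisjoint G S T} :=
    fun S => ⟨fun i => i.elim0, fun i => i.elim0, fun i _ _ => i.elim0⟩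
  by_cases hcase : n ≤ k + 2
  · obtain ⟨S, -, hS3⟩ := Finset.exists_subset_card_eq (s := (Finset.univ : Finset V)) (n := 3)
      (by rw [Finset.card_univ, ← hn]; exact hcard)
    refine ⟨S, hS3, ?_⟩
    apply csSup_le ⟨0, hzero _⟩
    rintro r ⟨T, hTree, hdisj⟩
    calc r ≤ n - 2 := r_le_card hS3 T hTree hdisj
      _ ≤ k := by omega
  · push_neg at hcase
    have hsetne : {m | ∃ S : Finset V, S.card = m ∧
        (¬ ((⊤ : G.Subgraph).deleteVerts ↑S).coe.Connected ∨
          Fintype.card V - S.card ≤ 1)}.Nonempty := by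
      obtain ⟨S, -, hS⟩ := Finset.exists_subset_card_eq (s := (Finset.univ : Finset V)) (n := n - 1)
        (by rw [Finset.card_univ, ← hn]; omega)
      exact ⟨n - 1, S, hS, Or.inr (by rw [hS]; omega)⟩
    have hkmem := Nat.sInf_mem hsetne
    rw [show sInf _ = k from rfl] at hkmem
    obtain ⟨W, hWcard, hWdis⟩ := hkmem
    have hnc : ¬ ((⊤ : G.Subgraph).deleteVerts ↑W).coe.Connected := by
      rcases hWdis with h | h
      · exact h
      · rw [hWcard] at h; omega
    obtain ⟨v, hv⟩ : (Finset.univ \ W).Nonempty := by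
      rw [← Finset.card_pos, Finset.card_sdiff_of_subset (Finset.subset_univ _), Finset.card_univ,
        hWcard]
      omega
    have hvW : v ∉ W := (Finset.mem_sdiff.mp hv).2
    have hnonempty : Nonempty ↥(((⊤ : G.Subgraph).deleteVerts (↑W : Set V)).verts) :=
      ⟨⟨v, ⟨Set.mem_univ v, by simpa using hvW⟩⟩⟩
    have hpre : ¬ ((⊤ : G.Subgraph).deleteVerts ↑W).coe.Preconnected := by
      intro h
      haveI := hnonempty
      exact hnc (SimpleGraph.Connected.mk h)
    rw [SimpleGraph.Preconnected] at hpre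
    push_neg at hpre
    obtain ⟨a, b, hnr⟩ := hpre
    have hab : a.1 ≠ b.1 := by
      intro h
      exact hnr (by rw [show a = b from Subtype.ext h])
    have haW : a.1 ∉ W := fun h => a.2.2 h
    have hbW : b.1 ∉ W := fun h => b.2.2 h
    obtain ⟨z, hz⟩ : (Finset.univ \ (W ∪ {a.1, b.1})).Nonempty := by
      rw [← Finset.card_pos, Finset.card_sdiff_of_subset (Finset.subset_univ _), Finset.card_univ]
      have h2 : (W ∪ {a.1, b.1}).card ≤ k + 2 := by
        refine (Finset.card_union_le _ _).trans ?_
        have : ({a.1, b.1} : Finset V).card ≤ 2 :=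
          (Finset.card_insert_le _ _).trans (by simp)
        omega
      omega
    rw [Finset.mem_sdiff, Finset.mem_union, Finset.mem_insert, Finset.mem_singleton] at hz
    push_neg at hz
    obtain ⟨-, hzW, hza, hzb⟩ := hz
    refine ⟨{a.1, b.1, z}, ?_, ?_⟩
    · rw [Finset.card_insert_of_notMem (by simp [hab, Ne.symm hza]),
        Finset.card_insert_of_notMem (by simp [Ne.symm hzb]), Finset.card_singleton]
    · apply csSup_le ⟨0, hzero _⟩
      rintro r ⟨T, hTree, hdisj⟩
      calc r ≤ W.card := r_le_cut hnr hzW T hTree hdisj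
        _ = k := hWcard
end
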